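/- arXiv:2202.11788 — 5 statements merged into one kernel-verified Lean document; each statement's English description precedes it below -/
import Mathlib

section
/- Let d ≥ 2 and p : [n_1]×⋯×[n_d] → ℝ. For each k = 1,…,d−1 suppose the rank of the k-th unfolding matrix of p is r_k, and let Φ_k : [n_1]×⋯×[n_k]×[r_k] → ℝ be any function such that the column space of the matrix Φ_k((x_1,…,x_k); α_k) equals the column space of the k-th unfolding matrix of p. Consider the d matrix equations in the unknowns G_1 : [n_1]×[r_1] → ℝ, G_k : [r_{k−1}]×[n_k]×[r_k] → ℝ (2 ≤ k ≤ d−1), G_d : [r_{d−1}]×[n_d] → ℝ: (1) G_1(x_1,α_1) = Φ_1(x_1,α_1); (2) for k = 2,…,d−1, Σ_{α_{k−1}=1}^{r_{k−1}} Φ_{k−1}((x_1,…,x_{k−1}),α_{k−1}) G_k(α_{k−1},x_k,α_k) = Φ_k((x_1,…,x_k),α_k) for all x_1,…,x_k,α_k; (3) Σ_{α_{d−1}=1}^{r_{d−1}} Φ_{d−1}((x_1,…,x_{d−1}),α_{d−1}) G_d(α_{d−1},x_d) = p(x_1,…,x_d) for all x. Then each of these equations has a unique solution, and the solutions satisfy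 p(x_1,…,x_d) = Σ_{α_1=1}^{r_1}⋯Σ_{α_{d−1}=1}^{r_{d−1}} G_1(x_1,α_1) G_2(α_1,x_2,α_2) ⋯ G_d(α_{d−1},x_d) for all (x_1,…,x_d), i.e., G_1,…,G_d are cores of a tensor train representation of p of rank (r_1,…,r_{d−1}). -/
open scoped BigOperators
open Matrix

/-- Indices `(x_0, …, x_{k-1})` of the first `k` variables (sizes given by `n`). -/
abbrev PreIdx (n : ℕ → ℕ) (k : ℕ) := ∀ i : Fin k, Fin (n i)

/-- Indices `(x_k, …, x_{d-1})` of the variables with position `≥ k`. -/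
abbrev SufIdx (n : ℕ → ℕ) (d k : ℕ) := ∀ i : {i : Fin d // k ≤ (i : ℕ)}, Fin (n i)

/-- Indices of the variables with position in the window `[a, b)`. -/
abbrev MidIdx (n : ℕ → ℕ) (d a b : ℕ) :=
  ∀ i : {i : Fin d // a ≤ (i : ℕ) ∧ (i : ℕ) < b}, Fin (n i)

/-- Glue a prefix index and a suffix index into a full index. -/
def glue {n : ℕ → ℕ} {d k : ℕ} (x : PreIdx n k) (y : SufIdx n d k) : PreIdx n d :=
  fun i => if h : (i : ℕ) < k then x ⟨i, h⟩ else y ⟨i, Nat.le_of_not_lt h⟩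

/-- The `k`-th unfolding matrix of a `d`-dimensional tensor `p`. -/
def unfold {n : ℕ → ℕ} {d : ℕ} (p : PreIdx n d → ℝ) (k : ℕ) :
    Matrix (PreIdx n k) (SufIdx n d k) ℝ :=
  Matrix.of fun x y => p (glue x y)

/-- Column space of a matrix: span of its columns. -/
noncomputable def colSpace {R C : Type*} (M : Matrix R C ℝ) : Submodule ℝ (R → ℝ) :=
  Submodule.span ℝ (Set.range fun c => fun r => M r c)

/-- Row space of a matrix: span of its rows. -/
noncomputable def rowSpace {R C : Type*} (M : Matrix R C ℝ) : Submodule ℝ (C → ℝ) :=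
  Submodule.span ℝ (Set.range fun r => fun c => M r c)

/-- Rank of a matrix (dimension of its column space). -/
noncomputable def mrank {R C : Type*} (M : Matrix R C ℝ) : ℕ :=
  Module.finrank ℝ ↥(colSpace M)

/-- Restriction of a prefix index to the first `k` variables. -/
def takePre {n : ℕ → ℕ} {k : ℕ} (x : PreIdx n (k + 1)) : PreIdx n k :=
  fun i => x ⟨i, Nat.lt_succ_of_lt i.isLt⟩

/-- Extend a prefix index by one more variable. -/
def snoc' {n : ℕ → ℕ} {k : ℕ} (z : PreIdx n k) (a : Fin (n k)) : PreIdx n (k + 1) :=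
  fun i =>
    if h : (i : ℕ) < k then z ⟨i, h⟩
    else Fin.cast (congrArg n (by have := i.isLt; omega : k = (i : ℕ))) a

/-- A family of tensor-train cores: core `k` has shape `r k × n k × r (k+1)`.
(The first and last cores carry a dummy index of size `r 0 = 1`, `r d = 1`.) -/
abbrev CoreType (n r : ℕ → ℕ) (d : ℕ) :=
  ∀ k : Fin d, Fin (r k) → Fin (n k) → Fin (r ((k : ℕ) + 1)) → ℝ

/-- Partial contraction of the first `k` cores. -/
noncomputable def ttPrefixF {d : ℕ} {n r : ℕ → ℕ} (G : CoreType n r d) :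
    (k : ℕ) → k ≤ d → PreIdx n k → Fin (r 0) → Fin (r k) → ℝ
  | 0, _, _, a, b => if (a : ℕ) = (b : ℕ) then 1 else 0
  | k + 1, h, x, a, b =>
      ∑ c : Fin (r k),
        ttPrefixF G k (Nat.le_of_succ_le h) (takePre x) a c * G ⟨k, h⟩ c (x (Fin.last k)) b

/-- Full contraction `G_1 ∘ ⋯ ∘ G_d` of a family of tensor-train cores. -/
noncomputable def ttContract {d : ℕ} {n r : ℕ → ℕ} (G : CoreType n r d)
    (x : PreIdx n d) : ℝ :=
  ∑ a : Fin (r 0), ∑ b : Fin (r d), ttPrefixF G d le_rfl x a b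

/-- The recursively contracted left sketch functions `S_k` built from blocks `s_k`. -/
noncomputable def leftSketch {n m : ℕ → ℕ}
    (s : ∀ k : ℕ, Fin (m (k + 1)) → Fin (n k) → Fin (m k) → ℝ) :
    (k : ℕ) → Fin (m k) → PreIdx n k → ℝ
  | 0, _, _ => 1
  | k + 1, β, x => ∑ c : Fin (m k), s k β (x (Fin.last k)) c * leftSketch s k c (takePre x)

/-- The right-sketched unfolding `Φ̄_k = p ∘ T_{k+1}`. -/
noncomputable def rightSketched {n : ℕ → ℕ} {d : ℕ} (p : PreIdx n d → ℝ)
    {ℓ : ℕ → ℕ} (T : ∀ k : ℕ, SufIdx n d k → Fin (ℓ k) → ℝ) (k : ℕ)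
    (x : PreIdx n k) (γ : Fin (ℓ k)) : ℝ :=
  ∑ y : SufIdx n d k, p (glue x y) * T k y γ

/-- The doubly sketched tensor `Φ̃_{j+1} = S_j ∘ Φ̄_{j+1}`. -/
noncomputable def tildePhi {n : ℕ → ℕ} {d : ℕ} {ℓ m : ℕ → ℕ} (p : PreIdx n d → ℝ)
    (T : ∀ k : ℕ, SufIdx n d k → Fin (ℓ k) → ℝ)
    (s : ∀ k : ℕ, Fin (m (k + 1)) → Fin (n k) → Fin (m k) → ℝ)
    (j : ℕ) (β : Fin (m j)) (xj : Fin (n j)) (γ : Fin (ℓ (j + 1))) : ℝ :=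
  ∑ z : PreIdx n j, leftSketch s j β z * rightSketched p T (j + 1) (snoc' z xj) γ

/-- Marginal of `p` on the window of variables `[a, b)`. -/
noncomputable def winMarg {n : ℕ → ℕ} {d : ℕ} (p : PreIdx n d → ℝ) (a b : ℕ)
    (y : MidIdx n d a b) : ℝ :=
  ∑ z : ∀ i : {i : Fin d // (i : ℕ) < a ∨ b ≤ (i : ℕ)}, Fin (n i),
    p fun i =>
      if h : a ≤ (i : ℕ) ∧ (i : ℕ) < b then y ⟨i, h⟩ else z ⟨i, by omega⟩

/-- Marginal of `p` on the window `[a, b)`, viewed as a matrix with rows indexed by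
variables in `[a, c)` and columns by variables in `[c, b)`. -/
noncomputable def winMatrix {n : ℕ → ℕ} {d : ℕ} (p : PreIdx n d → ℝ) (a c b : ℕ) :
    Matrix (MidIdx n d a c) (MidIdx n d c b) ℝ :=
  Matrix.of fun x y =>
    ∑ z : ∀ i : {i : Fin d // (i : ℕ) < a ∨ b ≤ (i : ℕ)}, Fin (n i),
      p fun i =>
        if h1 : a ≤ (i : ℕ) ∧ (i : ℕ) < c then x ⟨i, h1⟩
        else if h2 : c ≤ (i : ℕ) ∧ (i : ℕ) < b then y ⟨i, h2⟩
        else z ⟨i, by omega⟩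

/-- A (first-order) discrete Markov model: a probability density such that for all
`2 ≤ k ≤ d - 1` (1-based), `p(x) · p_k(x_k) = p_{1:k}(x_{1:k}) · p_{k:d}(x_{k:d})`. -/
def IsMarkov {n : ℕ → ℕ} {d : ℕ} (p : PreIdx n d → ℝ) : Prop :=
  (∀ x, 0 ≤ p x) ∧ (∑ x : PreIdx n d, p x) = 1 ∧
    ∀ k : ℕ, 2 ≤ k → k ≤ d - 1 → ∀ x : PreIdx n d,
      p x * winMarg p (k - 1) k (fun i => x i.1) =
        winMarg p 0 k (fun i => x i.1) * winMarg p (k - 1) d (fun i => x i.1)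

/-- An order-`m` discrete Markov model. -/
def IsMarkovOrder {n : ℕ → ℕ} {d : ℕ} (m : ℕ) (p : PreIdx n d → ℝ) : Prop :=
  (∀ x, 0 ≤ p x) ∧ (∑ x : PreIdx n d, p x) = 1 ∧
    ∀ k : ℕ, m + 1 ≤ k → k ≤ d - 1 → ∀ x : PreIdx n d,
      p x * winMarg p (k - m) k (fun i => x i.1) =
        winMarg p 0 k (fun i => x i.1) * winMarg p (k - m) d (fun i => x i.1)

/-- Spectral norm (ℓ² → ℓ² operator norm) of a matrix. -/
noncomputable def specNorm {R C : Type*} [Fintype R] [Fintype C] [DecidableEq C]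
    (M : Matrix R C ℝ) : ℝ :=
  ‖LinearMap.toContinuousLinearMap (Matrix.toEuclideanLin M)‖

/-- Moore–Penrose pseudoinverse of a full-column-rank matrix, `A⁺ = (AᵀA)⁻¹Aᵀ`. -/
noncomputable def pinv {m n : ℕ} (A : Matrix (Fin m) (Fin n) ℝ) :
    Matrix (Fin n) (Fin m) ℝ :=
  (Aᵀ * A)⁻¹ * Aᵀ

/-- The norm `|||G|||`: max over the middle index of the spectral norm of the slices. -/
noncomputable def tnorm {a b c : ℕ} (G : Fin a → Fin b → Fin c → ℝ) : ℝ :=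
  ⨆ i : Fin b, specNorm (Matrix.of fun x y => G x i y)

/-- Supremum norm of a 3-tensor. -/
noncomputable def supNorm3 {a b c : ℕ} (G : Fin a → Fin b → Fin c → ℝ) : ℝ :=
  ⨆ q : Fin a × Fin b × Fin c, |G q.1 q.2.1 q.2.2|

/-- Supremum norm of a `d`-dimensional tensor. -/
noncomputable def supNormF {n : ℕ → ℕ} {d : ℕ} (f : PreIdx n d → ℝ) : ℝ :=
  ⨆ x : PreIdx n d, |f x|

/-- The Core Determining Equations (CDEs) formed by `Φ_1, …, Φ_{d-1}` (here `d = d₀ + 2`). -/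
def CDE (d₀ : ℕ) (n r : ℕ → ℕ) (p : PreIdx n (d₀ + 2) → ℝ)
    (Φ : ∀ k : ℕ, PreIdx n k → Fin (r k) → ℝ) (G : CoreType n r (d₀ + 2)) : Prop :=
  (∀ (a : Fin (r 0)) (x : PreIdx n 1) (α : Fin (r 1)),
      G ⟨0, by omega⟩ a (x ⟨0, Nat.one_pos⟩) α = Φ 1 x α) ∧
  (∀ j : ℕ, ∀ _hj1 : 1 ≤ j, ∀ _hj2 : j ≤ d₀, ∀ (x : PreIdx n (j + 1)) (b : Fin (r (j + 1))),
      (∑ c : Fin (r j), Φ j (takePre x) c * G ⟨j, by omega⟩ c (x (Fin.last j)) b) =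
        Φ (j + 1) x b) ∧
  (∀ (x : PreIdx n (d₀ + 2)) (b : Fin (r (d₀ + 2))),
      (∑ c : Fin (r (d₀ + 1)), Φ (d₀ + 1) (takePre x) c *
          G ⟨d₀ + 1, by omega⟩ c (x (Fin.last (d₀ + 1))) b) = p x)


section Helpers

variable {n : ℕ → ℕ} {d k : ℕ}

lemma snoc'_last (z : PreIdx n k) (t : Fin (n k)) : snoc' z t (Fin.last k) = t := by
  have : ¬ ((Fin.last k : ℕ) < k) := by simp
  simp only [snoc', this, dif_neg]
  apply Fin.ext
  simp

lemma takePre_snoc' (z : PreIdx n k) (t : Fin (n k)) : takePre (snoc' z t) = z := by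
  funext i
  simp [takePre, snoc', i.isLt]

lemma snoc'_takePre (x : PreIdx n (k + 1)) :
    snoc' (takePre x) (x (Fin.last k)) = x := by
  funext i
  by_cases h : (i : ℕ) < k
  · simp [snoc', takePre, h]
  · have hi : i = Fin.last k := by
      apply Fin.ext
      have := i.isLt
      simp only [Fin.val_last]
      omega
    subst hi
    exact snoc'_last _ _

/-- Extend a suffix index on positions `≥ j+1` to one on positions `≥ j` by
prepending the value `t` at position `j`. -/
def sufCons {n : ℕ → ℕ} {d j : ℕ} (t : Fin (n j)) (y : SufIdx n d (j + 1)) :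
    SufIdx n d j :=
  fun i => if h : (i.1 : ℕ) = j then Fin.cast (congrArg n h.symm) t
    else y ⟨i.1, by have := i.2; omega⟩

lemma glue_snoc' {j : ℕ} (z : PreIdx n j) (t : Fin (n j)) (y : SufIdx n d (j + 1)) :
    glue (snoc' z t) y = glue z (sufCons t y) := by
  funext i
  by_cases h1 : (i : ℕ) < j
  · simp [glue, snoc', sufCons, h1, Nat.lt_succ_of_lt h1]
  · by_cases h2 : (i : ℕ) = j
    · have h3 : (i : ℕ) < j + 1 := by omega
      simp only [glue, h3, dif_pos, dif_neg h1, snoc', sufCons, h2]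
      simp
    · have h3 : ¬ ((i : ℕ) < j + 1) := by omega
      simp only [glue, dif_neg h1, dif_neg h3, sufCons, h2]
      simp

/-- The singleton suffix index (for the last position). -/
def sufSingle {n : ℕ → ℕ} {j : ℕ} (t : Fin (n j)) : SufIdx n (j + 1) j :=
  fun i => Fin.cast (congrArg n (by have := i.1.isLt; have := i.2; omega : j = (i.1 : ℕ))) t

lemma glue_sufSingle {j : ℕ} (z : PreIdx n j) (t : Fin (n j)) :
    glue z (sufSingle t) = snoc' z t := by
  funext i
  by_cases h : (i : ℕ) < j
  · simp [glue, snoc', sufSingle, h]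
  · simp only [glue, snoc', sufSingle, dif_neg h]

lemma restrict_colSpace {d j : ℕ} (p : PreIdx n d → ℝ) (t : Fin (n j))
    {v : PreIdx n (j + 1) → ℝ} (hv : v ∈ colSpace (unfold p (j + 1))) :
    (fun z : PreIdx n j => v (snoc' z t)) ∈ colSpace (unfold p j) := by
  have hmap : Submodule.map (LinearMap.funLeft ℝ ℝ (fun z : PreIdx n j => snoc' z t))
      (colSpace (unfold p (j + 1))) ≤ colSpace (unfold p j) := by
    rw [colSpace, Submodule.map_span, Submodule.span_le]
    rintro _ ⟨_, ⟨y, rfl⟩, rfl⟩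
    refine Submodule.subset_span ⟨sufCons t y, ?_⟩
    funext z
    exact (congrArg p (glue_snoc' z t y)).symm
  exact hmap ⟨v, hv, rfl⟩

/-- Proposition: Core Determining Equations.
If for each `k = 1, …, d-1` the `k`-th unfolding matrix of `p` has rank `r_k` and
`Φ_k` has the same column space as the `k`-th unfolding matrix, then each of the
Core Determining Equations has a unique solution, and the solutions `G_1, …, G_d`
form a tensor-train representation of `p` of rank `(r_1, …, r_{d-1})`.
(Here `d = d₀ + 2 ≥ 2`, indices are 0-based, and the first/last cores carry a dummy
index of size `r 0 = 1` resp. `r d = 1`.) -/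
theorem cde_unique_solution_and_tt_representation
    (d₀ : ℕ) (n r : ℕ → ℕ) (hr0 : r 0 = 1) (hrd : r (d₀ + 2) = 1)
    (p : PreIdx n (d₀ + 2) → ℝ)
    (hrank : ∀ k, 1 ≤ k → k ≤ d₀ + 1 → mrank (unfold p k) = r k)
    (Φ : ∀ k : ℕ, PreIdx n k → Fin (r k) → ℝ)
    (hΦ : ∀ k, 1 ≤ k → k ≤ d₀ + 1 →
        colSpace (Matrix.of (Φ k)) = colSpace (unfold p k)) :
    (∃! G : CoreType n r (d₀ + 2), CDE d₀ n r p Φ G) ∧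
      ∀ G : CoreType n r (d₀ + 2), CDE d₀ n r p Φ G → ∀ x, p x = ttContract G x := by
  classical
  -- Columns of Φ k are linearly independent.
  have hind : ∀ k, 1 ≤ k → k ≤ d₀ + 1 →
      LinearIndependent ℝ (fun b : Fin (r k) => fun x : PreIdx n k => Φ k x b) := by
    intro k h1 h2
    rw [linearIndependent_iff_card_eq_finrank_span, Fintype.card_fin]
    have hs : Set.finrank ℝ (Set.range fun b : Fin (r k) => fun x : PreIdx n k => Φ k x b)
        = mrank (Matrix.of (Φ k)) := rfl
    have hm : mrank (Matrix.of (Φ k)) = mrank (unfold p k) := by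
      unfold mrank; rw [hΦ k h1 h2]
    rw [hs, hm, hrank k h1 h2]
  -- Uniqueness of coefficients w.r.t. the columns of Φ k.
  have huniq : ∀ k, 1 ≤ k → k ≤ d₀ + 1 → ∀ c c' : Fin (r k) → ℝ,
      (∀ z : PreIdx n k, ∑ i, Φ k z i * c i = ∑ i, Φ k z i * c' i) → c = c' := by
    intro k h1 h2 c c' h
    have h0 : ∑ i, (fun i => c i - c' i) i • (fun b : Fin (r k) => fun x : PreIdx n k => Φ k x b) i = 0 := by
      funext z
      have hz := h z
      simp only [Finset.sum_apply, Pi.smul_apply, smul_eq_mul, Pi.zero_apply]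
      have : ∀ i ∈ Finset.univ, (c i - c' i) * Φ k z i = Φ k z i * c i - Φ k z i * c' i :=
        fun i _ => by ring
      rw [Finset.sum_congr rfl this, Finset.sum_sub_distrib, hz, sub_self]
    have hz := Fintype.linearIndependent_iff.mp (hind k h1 h2) _ h0
    funext i
    have := hz i
    linarith
  -- Solvability of the middle equations.
  have hsolv_mid : ∀ (j : ℕ) (t : Fin (n j)) (b : Fin (r (j + 1))),
      ∃ g : Fin (r j) → ℝ, 1 ≤ j → j ≤ d₀ →
        ∀ z : PreIdx n j, ∑ i, Φ j z i * g i = Φ (j + 1) (snoc' z t) b := by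
    intro j t b
    by_cases hj : 1 ≤ j ∧ j ≤ d₀
    · obtain ⟨h1, h2⟩ := hj
      have hcol : (fun x : PreIdx n (j + 1) => Φ (j + 1) x b)
          ∈ colSpace (unfold p (j + 1)) := by
        rw [← hΦ (j + 1) (by omega) (by omega)]
        exact Submodule.subset_span ⟨b, rfl⟩
      have hmem := restrict_colSpace p t hcol
      rw [← hΦ j h1 (by omega)] at hmem
      rw [colSpace] at hmem
      obtain ⟨g, hg⟩ := (Submodule.mem_span_range_iff_exists_fun ℝ).mp hmem
      refine ⟨g, fun _ _ z => ?_⟩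
      have hz := congrFun hg z
      simp only [Finset.sum_apply, Pi.smul_apply, smul_eq_mul] at hz
      rw [← hz]
      exact Finset.sum_congr rfl fun i _ => mul_comm _ _
    · exact ⟨0, fun h1 h2 => absurd ⟨h1, h2⟩ hj⟩
  choose gmid hgmid using hsolv_mid
  -- Solvability of the last equation.
  have hsolv_last : ∀ t : Fin (n (d₀ + 1)),
      ∃ g : Fin (r (d₀ + 1)) → ℝ,
        ∀ z : PreIdx n (d₀ + 1), ∑ i, Φ (d₀ + 1) z i * g i = p (snoc' z t) := by
    intro t
    have hmem : (fun z : PreIdx n (d₀ + 1) => p (snoc' z t))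
        ∈ colSpace (Matrix.of (Φ (d₀ + 1))) := by
      rw [hΦ (d₀ + 1) (by omega) (by omega)]
      exact Submodule.subset_span
        ⟨sufSingle t, funext fun z => congrArg p (glue_sufSingle z t)⟩
    rw [colSpace] at hmem
    obtain ⟨g, hg⟩ := (Submodule.mem_span_range_iff_exists_fun ℝ).mp hmem
    refine ⟨g, fun z => ?_⟩
    have hz := congrFun hg z
    simp only [Finset.sum_apply, Pi.smul_apply, smul_eq_mul] at hz
    rw [← hz]
    exact Finset.sum_congr rfl fun i _ => mul_comm _ _
  choose glast hglast using hsolv_last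
  -- TT representation from any solution of the CDEs.
  have hTT : ∀ G : CoreType n r (d₀ + 2), CDE d₀ n r p Φ G → ∀ x, p x = ttContract G x := by
    rintro G ⟨h1, h2, h3⟩ x
    have hpref : ∀ k (hk1 : 1 ≤ k) (hk2 : k ≤ d₀ + 1),
        ∀ (x : PreIdx n k) (a : Fin (r 0)) (b : Fin (r k)),
          ttPrefixF G k (by omega) x a b = Φ k x b := by
      intro k
      induction k with
      | zero => omega
      | succ m ih =>
        intro _ hk2 x a b
        rcases Nat.eq_zero_or_pos m with hm | hm
        · subst hm
          rw [ttPrefixF]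
          rw [Finset.sum_eq_single a
            (fun c _ hc => absurd (Fin.ext (by have := c.isLt; have := a.isLt; omega)) hc)
            (by simp)]
          rw [ttPrefixF]
          rw [if_pos rfl, one_mul]
          exact h1 a x b
        · rw [ttPrefixF]
          rw [Finset.sum_congr rfl
            (fun c _ => by rw [ih hm (by omega) (takePre x) a c])]
          exact h2 m hm (by omega) x b
    have hlast : ∀ (a : Fin (r 0)) (b : Fin (r (d₀ + 2))),
        ttPrefixF G (d₀ + 2) le_rfl x a b = p x := by
      intro a b
      show ttPrefixF G (d₀ + 1 + 1) le_rfl x a b = p x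
      rw [ttPrefixF]
      rw [Finset.sum_congr rfl
        (fun c _ => by rw [hpref (d₀ + 1) (by omega) le_rfl (takePre x) a c])]
      exact h3 x b
    rw [ttContract]
    rw [Finset.sum_congr rfl (fun a _ => Finset.sum_congr rfl (fun b _ => hlast a b))]
    rw [Finset.sum_const, Finset.sum_const, Finset.card_univ, Finset.card_univ,
      Fintype.card_fin, Fintype.card_fin, hr0, hrd, one_smul, one_smul]
  -- Uniqueness of solutions of the CDEs.
  have hU : ∀ G G' : CoreType n r (d₀ + 2), CDE d₀ n r p Φ G → CDE d₀ n r p Φ G' → G = G' := by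
    rintro G G' ⟨h1, h2, h3⟩ ⟨h1', h2', h3'⟩
    funext k
    obtain ⟨kv, hkv⟩ := k
    funext c t b
    rcases Nat.eq_zero_or_pos kv with hk0 | hkpos
    · subst hk0
      set x : PreIdx n 1 :=
        fun i => Fin.cast (congrArg n (by have := i.isLt; omega : (0 : ℕ) = (i : ℕ))) t with hxdef
      have hx0 : x ⟨0, Nat.one_pos⟩ = t := Fin.ext (by simp [hxdef])
      rw [← hx0]
      exact (h1 c x b).trans (h1' c x b).symm
    · rcases Nat.lt_or_ge kv (d₀ + 1) with hkm | hkl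
      · -- middle core
        have hmid : kv ≤ d₀ := by omega
        have key : ∀ z : PreIdx n kv,
            ∑ i, Φ kv z i * G ⟨kv, hkv⟩ i t b = ∑ i, Φ kv z i * G' ⟨kv, hkv⟩ i t b := by
          intro z
          have e1 := h2 kv hkpos hmid (snoc' z t) b
          have e2 := h2' kv hkpos hmid (snoc' z t) b
          rw [takePre_snoc', snoc'_last] at e1 e2
          exact e1.trans e2.symm
        have := huniq kv hkpos (by omega)
          (fun i => G ⟨kv, hkv⟩ i t b) (fun i => G' ⟨kv, hkv⟩ i t b) key
        exact congrFun this c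
      · -- last core
        have hkl' : kv = d₀ + 1 := by have := hkv; omega
        subst hkl'
        have key : ∀ z : PreIdx n (d₀ + 1),
            ∑ i, Φ (d₀ + 1) z i * G ⟨d₀ + 1, hkv⟩ i t b
              = ∑ i, Φ (d₀ + 1) z i * G' ⟨d₀ + 1, hkv⟩ i t b := by
          intro z
          have e1 := h3 (snoc' z t) b
          have e2 := h3' (snoc' z t) b
          rw [takePre_snoc', snoc'_last] at e1 e2
          exact e1.trans e2.symm
        have := huniq (d₀ + 1) (by omega) le_rfl
          (fun i => G ⟨d₀ + 1, hkv⟩ i t b) (fun i => G' ⟨d₀ + 1, hkv⟩ i t b) key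
        exact congrFun this c
  -- Existence.
  have hE : ∃ G : CoreType n r (d₀ + 2), CDE d₀ n r p Φ G := by
    refine ⟨fun k c t b =>
      if h0 : (k : ℕ) = 0 then
        Φ 1 (fun i => Fin.cast (congrArg n (by have := i.isLt; omega : ((k : ℕ) : ℕ) = (i : ℕ))) t)
          (Fin.cast (congrArg r (by omega : (k : ℕ) + 1 = 1)) b)
      else if hl : (k : ℕ) = d₀ + 1 then
        glast (Fin.cast (congrArg n hl) t) (Fin.cast (congrArg r hl) c)
      else gmid (k : ℕ) t b c, ?_, ?_, ?_⟩
    · intro a x α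
      beta_reduce
      rw [dif_pos rfl]
      have hx : (fun i : Fin 1 => Fin.cast (congrArg n (by have := i.isLt; omega : (0 : ℕ) = (i : ℕ)))
          (x ⟨0, Nat.one_pos⟩)) = x := by
        funext i
        have hi : i = ⟨0, Nat.one_pos⟩ := Subsingleton.elim _ _
        subst hi
        exact Fin.ext (by simp)
      have hα : Fin.cast (congrArg r (by omega : (0 : ℕ) + 1 = 1)) α = α := Fin.ext (by simp)
      rw [hα]
      exact congrArg (fun y => Φ 1 y α) hx
    · intro j hj1 hj2 x b
      beta_reduce
      have hne0 : ¬ ((⟨j, by omega⟩ : Fin (d₀ + 2)) : ℕ) = 0 := by simp; omega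
      have hnel : ¬ ((⟨j, by omega⟩ : Fin (d₀ + 2)) : ℕ) = d₀ + 1 := by simpa using by omega
      simp only [dif_neg hne0, dif_neg hnel]
      conv_rhs => rw [← snoc'_takePre x]
      exact hgmid j (x (Fin.last j)) b hj1 hj2 (takePre x)
    · intro x b
      beta_reduce
      have hne0 : ¬ ((⟨d₀ + 1, by omega⟩ : Fin (d₀ + 2)) : ℕ) = 0 := by simp
      have heq : ((⟨d₀ + 1, by omega⟩ : Fin (d₀ + 2)) : ℕ) = d₀ + 1 := rfl
      simp only [dif_neg hne0, dif_pos heq]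
      have hc : ∀ {m : ℕ} (h : m = m) (a : Fin m), Fin.cast (congrArg id h) a = a :=
        fun h a => rfl
      have hcast : ∀ (h : n (d₀ + 1) = n (d₀ + 1)) (a : Fin (n (d₀ + 1))), Fin.cast h a = a :=
        fun h a => Fin.ext (by simp)
      have hcast' : ∀ (h : r (d₀ + 1) = r (d₀ + 1)) (a : Fin (r (d₀ + 1))), Fin.cast h a = a :=
        fun h a => Fin.ext (by simp)
      simp only [hcast, hcast']
      conv_rhs => rw [← snoc'_takePre x]
      exact hglast (x (Fin.last (d₀ + 1))) (takePre x)
  obtain ⟨G₀, hG₀⟩ := hE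
  exact ⟨⟨G₀, hG₀, fun G hG => hU G G₀ hG hG₀⟩, hTT⟩
end Helpers
end

section
/- In the setting of the TT-RS construction (sketch functions T_{k+1}, s_k, the recursively contracted left sketches S_k, the tensors Φ̄_k, Φ̃_k, and the trimmed tensors B_k as defined there), assume: the rank of the k-th unfolding matrix of p is r_k for each k; (i) for k = 1,…,d−1 the matrices Φ̄_k((x_1,…,x_k);γ_k) and the k-th unfolding matrix of p have the same column space; (ii) for k = 2,…,d−1 the matrices Φ̃_k((β_{k−1},x_k);γ_k) and Φ̄_k((x_1,…,x_k);γ_k) have the same row space. Then: (a) the column space of B_1(x_1;α_1) equals the column space of the first unfolding matrix of p; and (b) for each k = 2,…,d−1 there exists Φ_k : [n_1]×⋯×[n_k]×[r_k] → ℝ such that the column space of the matrix Φ_k((x_1,…,x_k);α_k) equals the column space of the k-th unfolding matrix of p and B_k(β_{k−1},x_k,α_k) = Σ_{x_1,…,x_{k−1}} S_{k−1}(β_{k−1},(x_1,…,x_{k−1})) Φ_k((x_1,…,x_{k−1}),x_k,α_k) for all β_{k−1}, x_k, α_k. -/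
open scoped BigOperators
open Matrix

section Helpers

lemma colSpace_map_cols {R R' C : Type*}
    (L : (R → ℝ) →ₗ[ℝ] (R' → ℝ)) (M : Matrix R C ℝ) :
    colSpace (Matrix.of fun r c => L (fun x => M x c) r)
      = Submodule.map L (colSpace M) := by
  rw [colSpace, colSpace, Submodule.map_span, ← Set.range_comp]
  rfl

end Helpers

set_option maxHeartbeats 2000000 in
/-- Lemma: the trimmed tensors `B_k` are sketched versions of suitable
exact factors `Φ_k`.
Under conditions (i) (each `Φ̄_k` has the same column space as the `k`-th unfolding
matrix) and (ii) (each `Φ̃_k` has the same row space as `Φ̄_k`):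
(a) the column space of `B_1` equals the column space of the first unfolding matrix of
`p`, and (b) for each `k = 2, …, d-1` there is a `Φ_k` whose column space equals the
column space of the `k`-th unfolding matrix, with `B_k = S_{k-1} ∘ Φ_k`.
(Here `d = d₀ + 2 ≥ 2`, 0-based indexing: `B j`, `tildePhi … j` correspond to the
paper's `B_{j+1}`, `Φ̃_{j+1}`; the first left sketch block carries a dummy
index of size `m 0 = 1`.) -/
theorem ttrs_trimming_gives_sketched_exact_factors
    (d₀ : ℕ) (n r ℓ m : ℕ → ℕ) (hm0 : m 0 = 1)
    (p : PreIdx n (d₀ + 2) → ℝ)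
    (hrank : ∀ k, 1 ≤ k → k ≤ d₀ + 1 → mrank (unfold p k) = r k)
    (hℓ : ∀ k, 1 ≤ k → k ≤ d₀ + 1 → r k ≤ ℓ k)
    (T : ∀ k : ℕ, SufIdx n (d₀ + 2) k → Fin (ℓ k) → ℝ)
    (s : ∀ j : ℕ, Fin (m (j + 1)) → Fin (n j) → Fin (m j) → ℝ)
    (B : ∀ j : ℕ, Fin (m j) → Fin (n j) → Fin (r (j + 1)) → ℝ)
    (hBortho : ∀ j, j ≤ d₀ →
      (Matrix.of fun (q : Fin (m j) × Fin (n j)) (α : Fin (r (j + 1))) => B j q.1 q.2 α)ᵀ *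
        (Matrix.of fun (q : Fin (m j) × Fin (n j)) (α : Fin (r (j + 1))) => B j q.1 q.2 α) = 1)
    (hBspan : ∀ j, j ≤ d₀ →
      colSpace (Matrix.of fun (q : Fin (m j) × Fin (n j)) (α : Fin (r (j + 1))) =>
          B j q.1 q.2 α) =
        colSpace (Matrix.of fun (q : Fin (m j) × Fin (n j)) (γ : Fin (ℓ (j + 1))) =>
          tildePhi p T s j q.1 q.2 γ))
    (hi : ∀ k, 1 ≤ k → k ≤ d₀ + 1 →
      colSpace (Matrix.of (rightSketched p T k)) = colSpace (unfold p k))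
    (hii : ∀ j, 1 ≤ j → j ≤ d₀ →
      rowSpace (Matrix.of fun (q : Fin (m j) × Fin (n j)) (γ : Fin (ℓ (j + 1))) =>
          tildePhi p T s j q.1 q.2 γ) =
        rowSpace (Matrix.of (rightSketched p T (j + 1)))) :
    (∀ c : Fin (m 0),
      colSpace (Matrix.of fun (x : PreIdx n 1) (α : Fin (r 1)) =>
          B 0 c (x ⟨0, Nat.one_pos⟩) α) = colSpace (unfold p 1)) ∧
    ∀ j, 1 ≤ j → j ≤ d₀ →
      ∃ Φk : PreIdx n (j + 1) → Fin (r (j + 1)) → ℝ,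
        colSpace (Matrix.of Φk) = colSpace (unfold p (j + 1)) ∧
        ∀ (β : Fin (m j)) (x : Fin (n j)) (α : Fin (r (j + 1))),
          B j β x α = ∑ z : PreIdx n j, leftSketch s j β z * Φk (snoc' z x) α := by
  constructor
  · -- part (a)
    intro c
    have key := hBspan 0 (Nat.zero_le _)
    have h1 : colSpace (Matrix.of fun (x : PreIdx n 1) (α : Fin (r 1)) =>
          B 0 c (x ⟨0, Nat.one_pos⟩) α)
        = Submodule.map (LinearMap.funLeft ℝ ℝ
            (fun x : PreIdx n 1 => ((c, x ⟨0, Nat.one_pos⟩) : Fin (m 0) × Fin (n 0))))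
          (colSpace (Matrix.of fun (q : Fin (m 0) × Fin (n 0)) (α : Fin (r 1)) =>
            B 0 q.1 q.2 α)) :=
      colSpace_map_cols (LinearMap.funLeft ℝ ℝ
          (fun x : PreIdx n 1 => ((c, x ⟨0, Nat.one_pos⟩) : Fin (m 0) × Fin (n 0))))
        (Matrix.of fun (q : Fin (m 0) × Fin (n 0)) (α : Fin (r 1)) => B 0 q.1 q.2 α)
    have h2 : colSpace (Matrix.of fun (x : PreIdx n 1) (γ : Fin (ℓ 1)) =>
          tildePhi p T s 0 c (x ⟨0, Nat.one_pos⟩) γ)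
        = Submodule.map (LinearMap.funLeft ℝ ℝ
            (fun x : PreIdx n 1 => ((c, x ⟨0, Nat.one_pos⟩) : Fin (m 0) × Fin (n 0))))
          (colSpace (Matrix.of fun (q : Fin (m 0) × Fin (n 0)) (γ : Fin (ℓ 1)) =>
            tildePhi p T s 0 q.1 q.2 γ)) :=
      colSpace_map_cols (LinearMap.funLeft ℝ ℝ
          (fun x : PreIdx n 1 => ((c, x ⟨0, Nat.one_pos⟩) : Fin (m 0) × Fin (n 0))))
        (Matrix.of fun (q : Fin (m 0) × Fin (n 0)) (γ : Fin (ℓ 1)) => tildePhi p T s 0 q.1 q.2 γ)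
    have hsnoc : ∀ (z : PreIdx n 0) (x : PreIdx n 1),
        snoc' z (x ⟨0, Nat.one_pos⟩) = x := by
      intro z x
      funext i
      have hi : i = ⟨0, Nat.one_pos⟩ := Fin.ext (Nat.lt_one_iff.mp i.isLt)
      subst hi
      apply Fin.ext
      simp [snoc']
    have hmat : (Matrix.of fun (x : PreIdx n 1) (γ : Fin (ℓ 1)) =>
          tildePhi p T s 0 c (x ⟨0, Nat.one_pos⟩) γ)
        = Matrix.of (rightSketched p T 1) := by
      funext x γ
      show tildePhi p T s 0 c (x ⟨0, Nat.one_pos⟩) γ = rightSketched p T 1 x γ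
      rw [tildePhi]
      have : ∀ z : PreIdx n 0,
          leftSketch s 0 c z * rightSketched p T 1 (snoc' z (x ⟨0, Nat.one_pos⟩)) γ
            = rightSketched p T 1 x γ := by
        intro z
        rw [hsnoc z x]
        simp [leftSketch]
      rw [Finset.sum_congr rfl (fun z _ => this z)]
      simp
    rw [h1, key, ← h2, hmat, hi 1 le_rfl (by omega)]
  · -- part (b)
    intro j hj1 hj2
    have hspan := hBspan j hj2
    have hmem : ∀ α : Fin (r (j + 1)),
        (fun q : Fin (m j) × Fin (n j) => B j q.1 q.2 α) ∈
          colSpace (Matrix.of fun (q : Fin (m j) × Fin (n j)) (γ : Fin (ℓ (j + 1))) =>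
            tildePhi p T s j q.1 q.2 γ) := by
      intro α
      rw [← hspan]
      exact Submodule.subset_span ⟨α, rfl⟩
    have hW : ∀ α : Fin (r (j + 1)), ∃ w : Fin (ℓ (j + 1)) → ℝ,
        ∑ γ, w γ • (fun q : Fin (m j) × Fin (n j) => tildePhi p T s j q.1 q.2 γ)
          = fun q : Fin (m j) × Fin (n j) => B j q.1 q.2 α := by
      intro α
      exact (Submodule.mem_span_range_iff_exists_fun ℝ).mp (hmem α)
    choose W hWs using hW
    set Φk : PreIdx n (j + 1) → Fin (r (j + 1)) → ℝ :=
      fun x α => ∑ γ, W α γ * rightSketched p T (j + 1) x γ with hΦk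
    have hB : ∀ (β : Fin (m j)) (x : Fin (n j)) (α : Fin (r (j + 1))),
        B j β x α = ∑ z : PreIdx n j, leftSketch s j β z * Φk (snoc' z x) α := by
      intro β x α
      have h1 := congrFun (hWs α) (β, x)
      simp only [Finset.sum_apply, Pi.smul_apply, smul_eq_mul] at h1
      rw [← h1]
      simp only [tildePhi, hΦk, Finset.mul_sum]
      rw [Finset.sum_comm]
      exact Finset.sum_congr rfl fun z _ => Finset.sum_congr rfl fun γ _ => by ring
    refine ⟨Φk, ?_, hB⟩
    -- column space equality
    have hle : colSpace (Matrix.of Φk) ≤ colSpace (unfold p (j + 1)) := by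
      rw [← hi (j + 1) (by omega) (by omega), colSpace, Submodule.span_le]
      rintro _ ⟨α, rfl⟩
      have hcol : (fun x => (Matrix.of Φk) x α)
          = ∑ γ, W α γ • (fun x => (Matrix.of (rightSketched p T (j + 1))) x γ) := by
        funext x
        simp [hΦk, Finset.sum_apply]
      show (fun x => (Matrix.of Φk) x α) ∈ colSpace (Matrix.of (rightSketched p T (j + 1)))
      rw [hcol]
      exact Submodule.sum_mem _ fun γ _ =>
        Submodule.smul_mem _ _ (Submodule.subset_span ⟨γ, rfl⟩)
    -- linear independence of the columns of B j
    have hBli : LinearIndependent ℝ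
        (fun (α : Fin (r (j + 1))) (q : Fin (m j) × Fin (n j)) => B j q.1 q.2 α) := by
      rw [Fintype.linearIndependent_iff]
      intro g hg α
      have h2 : ∀ q : Fin (m j) × Fin (n j),
          ∑ α' : Fin (r (j + 1)), g α' * B j q.1 q.2 α' = 0 := by
        intro q
        simpa [Finset.sum_apply] using congrFun hg q
      have hgram := hBortho j hj2
      have h3 := congrFun (congrFun hgram α) α
      calc g α = ∑ α' : Fin (r (j + 1)), g α' *
            ((Matrix.of fun (q : Fin (m j) × Fin (n j)) (β : Fin (r (j + 1))) =>
                B j q.1 q.2 β)ᵀ *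
              (Matrix.of fun (q : Fin (m j) × Fin (n j)) (β : Fin (r (j + 1))) =>
                B j q.1 q.2 β)) α α' := by
            rw [hgram]
            simp [Matrix.one_apply]
        _ = ∑ q : Fin (m j) × Fin (n j), B j q.1 q.2 α *
              ∑ α' : Fin (r (j + 1)), g α' * B j q.1 q.2 α' := by
            simp only [Matrix.mul_apply, Matrix.transpose_apply, Matrix.of_apply,
              Finset.mul_sum]
            rw [Finset.sum_comm]
            exact Finset.sum_congr rfl fun q _ =>
              Finset.sum_congr rfl fun α' _ => by ring
        _ = 0 := by simp [h2]
    have hBfr : Module.finrank ℝ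
        (colSpace (Matrix.of fun (q : Fin (m j) × Fin (n j)) (α : Fin (r (j + 1))) =>
          B j q.1 q.2 α)) = r (j + 1) := by
      rw [colSpace]
      rw [show (Set.range fun (α : Fin (r (j + 1))) =>
          fun q : Fin (m j) × Fin (n j) =>
            (Matrix.of fun (q : Fin (m j) × Fin (n j)) (α : Fin (r (j + 1))) =>
              B j q.1 q.2 α) q α)
          = Set.range (fun (α : Fin (r (j + 1))) (q : Fin (m j) × Fin (n j)) =>
              B j q.1 q.2 α) from rfl]
      rw [finrank_span_eq_card hBli, Fintype.card_fin]
    -- B = L ∘ Φk  for a linear map L, hence rank B ≤ rank Φk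
    let L : (PreIdx n (j + 1) → ℝ) →ₗ[ℝ] ((Fin (m j) × Fin (n j)) → ℝ) :=
      { toFun := fun f q => ∑ z : PreIdx n j, leftSketch s j q.1 z * f (snoc' z q.2)
        map_add' := by
          intro f g
          funext q
          simp [mul_add, Finset.sum_add_distrib]
        map_smul' := by
          intro a f
          funext q
          simp only [Pi.smul_apply, smul_eq_mul, RingHom.id_apply, Finset.mul_sum]
          exact Finset.sum_congr rfl fun z _ => by ring }
    have hBeq : (Matrix.of fun (q : Fin (m j) × Fin (n j)) (α : Fin (r (j + 1))) =>
          B j q.1 q.2 α)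
        = Matrix.of fun (q : Fin (m j) × Fin (n j)) (α : Fin (r (j + 1))) =>
            L (fun x => (Matrix.of Φk) x α) q := by
      funext q α
      exact hB q.1 q.2 α
    have hmap : colSpace (Matrix.of fun (q : Fin (m j) × Fin (n j)) (α : Fin (r (j + 1))) =>
          B j q.1 q.2 α) = Submodule.map L (colSpace (Matrix.of Φk)) := by
      rw [hBeq]
      exact colSpace_map_cols L (Matrix.of Φk)
    have hrk : Module.finrank ℝ (colSpace (unfold p (j + 1)))
        ≤ Module.finrank ℝ (colSpace (Matrix.of Φk)) := by
      have h4 : mrank (unfold p (j + 1)) = r (j + 1) := hrank (j + 1) (by omega) (by omega)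
      rw [mrank] at h4
      calc Module.finrank ℝ (colSpace (unfold p (j + 1))) = r (j + 1) := h4
        _ = Module.finrank ℝ
              (colSpace (Matrix.of fun (q : Fin (m j) × Fin (n j)) (α : Fin (r (j + 1))) =>
                B j q.1 q.2 α)) := hBfr.symm
        _ = Module.finrank ℝ (Submodule.map L (colSpace (Matrix.of Φk))) := by rw [hmap]
        _ ≤ Module.finrank ℝ (colSpace (Matrix.of Φk)) := Submodule.finrank_map_le L _
    exact Submodule.eq_of_le_of_finrank_le hle hrk
end

section
/- Let p be a discrete Markov model on [n_1]×⋯×[n_d]. Then for any indices 1 ≤ i ≤ k < j ≤ d, the matrix p((x_i,…,x_k);(x_{k+1},…,x_j)) (the marginal of p on variables x_i,…,x_j, viewed as a matrix with rows indexed by (x_i,…,x_k) and columns by (x_{k+1},…,x_j)) and the matrix p((x_i,…,x_k);x_{k+1}) (the marginal of p on variables x_i,…,x_{k+1}, with rows indexed by (x_i,…,x_k) and columns by x_{k+1}) have the same column space. -/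
open scoped BigOperators
open Matrix

section
variable {d : ℕ} {n : ℕ → ℕ}

def mrg {P Q R : Fin d → Prop} [DecidablePred P]
    (hR : ∀ i, R i → P i ∨ Q i)
    (u : ∀ i : {i : Fin d // P i}, Fin (n i)) (v : ∀ i : {i : Fin d // Q i}, Fin (n i)) :
    ∀ i : {i : Fin d // R i}, Fin (n i) :=
  fun i => if h : P i.1 then u ⟨i.1, h⟩ else v ⟨i.1, (hR i.1 i.2).resolve_left h⟩

def splitEquiv {P Q R : Fin d → Prop} [DecidablePred P]
    (hR : ∀ i, R i → P i ∨ Q i) (hP : ∀ i, P i → R i) (hQ : ∀ i, Q i → R i)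
    (hdisj : ∀ i, P i → Q i → False) :
    (∀ i : {i : Fin d // R i}, Fin (n i))
      ≃ (∀ i : {i : Fin d // P i}, Fin (n i)) × (∀ i : {i : Fin d // Q i}, Fin (n i)) where
  toFun w := (fun i => w ⟨i.1, hP i.1 i.2⟩, fun i => w ⟨i.1, hQ i.1 i.2⟩)
  invFun uv := mrg hR uv.1 uv.2
  left_inv := by
    intro w; funext i
    simp only [mrg]
    split_ifs <;> rfl
  right_inv := by
    rintro ⟨u, v⟩
    refine Prod.ext ?_ ?_
    · funext i; simp only [mrg]; rw [dif_pos i.2]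
    · funext i; simp only [mrg]; rw [dif_neg (fun h => hdisj i.1 h i.2)]

lemma sum_split {P Q R : Fin d → Prop} [DecidablePred P] [DecidablePred Q] [DecidablePred R]
    (hR : ∀ i, R i → P i ∨ Q i) (hP : ∀ i, P i → R i) (hQ : ∀ i, Q i → R i)
    (hdisj : ∀ i, P i → Q i → False)
    (f : (∀ i : {i : Fin d // R i}, Fin (n i)) → ℝ) :
    ∑ w : ∀ i : {i : Fin d // R i}, Fin (n i), f w
      = ∑ u : ∀ i : {i : Fin d // P i}, Fin (n i),
        ∑ v : ∀ i : {i : Fin d // Q i}, Fin (n i), f (mrg hR u v) := by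
  rw [← Equiv.sum_comp (splitEquiv hR hP hQ hdisj).symm f, Fintype.sum_prod_type]
  rfl

variable (a c b : ℕ)

/-- assemble five blocks into a full index -/
def asm (z0 : MidIdx n d 0 a) (z1 : MidIdx n d a c) (z2 : MidIdx n d c (c+1))
    (z3 : MidIdx n d (c+1) b) (z4 : MidIdx n d b d) : PreIdx n d :=
  fun i =>
    if h0 : 0 ≤ (i : ℕ) ∧ (i : ℕ) < a then z0 ⟨i, h0⟩
    else if h1 : a ≤ (i : ℕ) ∧ (i : ℕ) < c then z1 ⟨i, h1⟩
    else if h2 : c ≤ (i : ℕ) ∧ (i : ℕ) < c + 1 then z2 ⟨i, h2⟩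
    else if h3 : c + 1 ≤ (i : ℕ) ∧ (i : ℕ) < b then z3 ⟨i, h3⟩
    else z4 ⟨i, ⟨by omega, i.isLt⟩⟩

variable {p : PreIdx n d → ℝ}

/-- Mq -/
noncomputable def Mq (p : PreIdx n d → ℝ) (z2 : MidIdx n d c (c+1)) : ℝ :=
  ∑ z0 : MidIdx n d 0 a, ∑ z1 : MidIdx n d a c, ∑ z3 : MidIdx n d (c+1) b,
    ∑ z4 : MidIdx n d b d, p (asm a c b z0 z1 z2 z3 z4)

lemma repM (hac : a < c) (hcb : c + 1 ≤ b) (hbd : b ≤ d) (z2 : MidIdx n d c (c+1)) :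
    winMarg p c (c+1) z2 = Mq a c b p z2 := by
  rw [winMarg]
  rw [sum_split (R := fun i => (i:ℕ) < c ∨ c + 1 ≤ (i:ℕ))
    (P := fun i => 0 ≤ (i:ℕ) ∧ (i:ℕ) < a)
    (Q := fun i => (a ≤ (i:ℕ) ∧ (i:ℕ) < c) ∨ c + 1 ≤ (i:ℕ))
    (fun i h => by omega) (fun i h => by omega) (fun i h => by omega) (fun i h h' => by omega)]
  refine Finset.sum_congr rfl fun z0 _ => ?_
  rw [sum_split (R := fun i => (a ≤ (i:ℕ) ∧ (i:ℕ) < c) ∨ c + 1 ≤ (i:ℕ))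
    (P := fun i => a ≤ (i:ℕ) ∧ (i:ℕ) < c)
    (Q := fun i => c + 1 ≤ (i:ℕ) ∧ (i:ℕ) < d)
    (fun i h => by omega) (fun i h => by omega) (fun i h => by omega) (fun i h h' => by omega)]
  refine Finset.sum_congr rfl fun z1 _ => ?_
  rw [sum_split (R := fun i => c + 1 ≤ (i:ℕ) ∧ (i:ℕ) < d)
    (P := fun i => c + 1 ≤ (i:ℕ) ∧ (i:ℕ) < b)
    (Q := fun i => b ≤ (i:ℕ) ∧ (i:ℕ) < d)
    (fun i h => by omega) (fun i h => by omega) (fun i h => by omega) (fun i h h' => by omega)]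
  refine Finset.sum_congr rfl fun z3 _ => ?_
  refine Finset.sum_congr rfl fun z4 _ => ?_
  congr 1
  funext i
  simp only [mrg, asm]
  split_ifs <;> first | rfl | omega

def pi2 (hcb : c + 1 ≤ b) (y : MidIdx n d c b) : MidIdx n d c (c+1) :=
  fun i => y ⟨i.1, ⟨i.2.1, lt_of_lt_of_le i.2.2 hcb⟩⟩

def pi3 (y : MidIdx n d c b) : MidIdx n d (c+1) b :=
  fun i => y ⟨i.1, ⟨le_trans (Nat.le_succ c) i.2.1, i.2.2⟩⟩

def rho (z2 : MidIdx n d c (c+1)) (z3 : MidIdx n d (c+1) b) : MidIdx n d c b :=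
  fun i => if h : (i : ℕ) < c + 1 then z2 ⟨i.1, ⟨i.2.1, h⟩⟩
    else z3 ⟨i.1, ⟨Nat.le_of_not_lt h, i.2.2⟩⟩

lemma pi2_rho (hcb : c + 1 ≤ b) (z2 : MidIdx n d c (c+1)) (z3 : MidIdx n d (c+1) b) :
    pi2 c b hcb (rho c b z2 z3) = z2 := by
  funext i; simp only [pi2, rho]; rw [dif_pos i.2.2]

lemma pi3_rho (z2 : MidIdx n d c (c+1)) (z3 : MidIdx n d (c+1) b) :
    pi3 c b (rho c b z2 z3) = z3 := by
  funext i; simp only [pi3, rho]; rw [dif_neg (Nat.not_lt.mpr i.2.1)]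

lemma repA (hac : a < c) (hcb : c + 1 ≤ b) (hbd : b ≤ d)
    (x : MidIdx n d a c) (y : MidIdx n d c b) :
    winMatrix p a c b x y
      = ∑ z0 : MidIdx n d 0 a, ∑ z4 : MidIdx n d b d,
          p (asm a c b z0 x (pi2 c b hcb y) (pi3 c b y) z4) := by
  rw [winMatrix]
  rw [Matrix.of_apply]
  rw [sum_split (R := fun i => (i:ℕ) < a ∨ b ≤ (i:ℕ))
    (P := fun i => 0 ≤ (i:ℕ) ∧ (i:ℕ) < a)
    (Q := fun i => b ≤ (i:ℕ) ∧ (i:ℕ) < d)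
    (fun i h => by omega) (fun i h => by omega) (fun i h => by omega) (fun i h h' => by omega)]
  refine Finset.sum_congr rfl fun z0 _ => ?_
  refine Finset.sum_congr rfl fun z4 _ => ?_
  congr 1
  funext i
  simp only [mrg, asm, pi2, pi3]
  split_ifs <;> first | rfl | omega

lemma repB (hac : a < c) (hcb : c + 1 ≤ b) (hbd : b ≤ d)
    (x : MidIdx n d a c) (z2 : MidIdx n d c (c+1)) :
    winMatrix p a c (c+1) x z2
      = ∑ z0 : MidIdx n d 0 a, ∑ z3 : MidIdx n d (c+1) b, ∑ z4 : MidIdx n d b d,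
          p (asm a c b z0 x z2 z3 z4) := by
  rw [winMatrix]
  rw [Matrix.of_apply]
  rw [sum_split (R := fun i => (i:ℕ) < a ∨ c + 1 ≤ (i:ℕ))
    (P := fun i => 0 ≤ (i:ℕ) ∧ (i:ℕ) < a)
    (Q := fun i => c + 1 ≤ (i:ℕ) ∧ (i:ℕ) < d)
    (fun i h => by omega) (fun i h => by omega) (fun i h => by omega) (fun i h h' => by omega)]
  refine Finset.sum_congr rfl fun z0 _ => ?_
  rw [sum_split (R := fun i => c + 1 ≤ (i:ℕ) ∧ (i:ℕ) < d)
    (P := fun i => c + 1 ≤ (i:ℕ) ∧ (i:ℕ) < b)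
    (Q := fun i => b ≤ (i:ℕ) ∧ (i:ℕ) < d)
    (fun i h => by omega) (fun i h => by omega) (fun i h => by omega) (fun i h h' => by omega)]
  refine Finset.sum_congr rfl fun z3 _ => ?_
  refine Finset.sum_congr rfl fun z4 _ => ?_
  congr 1
  funext i
  simp only [mrg, asm]
  split_ifs <;> first | rfl | omega

lemma repPre (hac : a < c) (hcb : c + 1 ≤ b) (hbd : b ≤ d)
    (z0 : MidIdx n d 0 a) (z1 : MidIdx n d a c) (z2 : MidIdx n d c (c+1))
    (z3 : MidIdx n d (c+1) b) (z4 : MidIdx n d b d) :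
    winMarg p 0 (c+1) (fun i => asm a c b z0 z1 z2 z3 z4 i.1)
      = ∑ w3 : MidIdx n d (c+1) b, ∑ w4 : MidIdx n d b d,
          p (asm a c b z0 z1 z2 w3 w4) := by
  rw [winMarg]
  rw [sum_split (R := fun i => (i:ℕ) < 0 ∨ c + 1 ≤ (i:ℕ))
    (P := fun i => c + 1 ≤ (i:ℕ) ∧ (i:ℕ) < b)
    (Q := fun i => b ≤ (i:ℕ) ∧ (i:ℕ) < d)
    (fun i h => by omega) (fun i h => by omega) (fun i h => by omega) (fun i h h' => by omega)]
  refine Finset.sum_congr rfl fun w3 _ => ?_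
  refine Finset.sum_congr rfl fun w4 _ => ?_
  congr 1
  funext i
  simp only [mrg, asm]
  split_ifs <;> first | rfl | omega

lemma repSuf (hac : a < c) (hcb : c + 1 ≤ b) (hbd : b ≤ d)
    (z0 : MidIdx n d 0 a) (z1 : MidIdx n d a c) (z2 : MidIdx n d c (c+1))
    (z3 : MidIdx n d (c+1) b) (z4 : MidIdx n d b d) :
    winMarg p c d (fun i => asm a c b z0 z1 z2 z3 z4 i.1)
      = ∑ w0 : MidIdx n d 0 a, ∑ w1 : MidIdx n d a c,
          p (asm a c b w0 w1 z2 z3 z4) := by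
  rw [winMarg]
  rw [sum_split (R := fun i => (i:ℕ) < c ∨ d ≤ (i:ℕ))
    (P := fun i => 0 ≤ (i:ℕ) ∧ (i:ℕ) < a)
    (Q := fun i => a ≤ (i:ℕ) ∧ (i:ℕ) < c)
    (fun i h => by omega) (fun i h => by omega) (fun i h => by omega) (fun i h h' => by omega)]
  refine Finset.sum_congr rfl fun w0 _ => ?_
  refine Finset.sum_congr rfl fun w1 _ => ?_
  congr 1
  funext i
  simp only [mrg, asm]
  split_ifs <;> first | rfl | omega


lemma markovPt (hp : IsMarkov p) (hac : a < c) (hcb : c + 1 < b) (hbd : b ≤ d)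
    (z0 : MidIdx n d 0 a) (z1 : MidIdx n d a c) (z2 : MidIdx n d c (c+1))
    (z3 : MidIdx n d (c+1) b) (z4 : MidIdx n d b d) :
    p (asm a c b z0 z1 z2 z3 z4) * Mq a c b p z2
      = (∑ w3 : MidIdx n d (c+1) b, ∑ w4 : MidIdx n d b d, p (asm a c b z0 z1 z2 w3 w4))
        * (∑ w0 : MidIdx n d 0 a, ∑ w1 : MidIdx n d a c, p (asm a c b w0 w1 z2 z3 z4)) := by
  have h : p (asm a c b z0 z1 z2 z3 z4)
        * winMarg p c (c+1) (fun i => asm a c b z0 z1 z2 z3 z4 i.1)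
      = winMarg p 0 (c+1) (fun i => asm a c b z0 z1 z2 z3 z4 i.1)
        * winMarg p c d (fun i => asm a c b z0 z1 z2 z3 z4 i.1) :=
    hp.2.2 (c+1) (by omega) (by omega) (asm a c b z0 z1 z2 z3 z4)
  have e2 : (fun i : {i : Fin d // c ≤ (i : ℕ) ∧ (i : ℕ) < c + 1} =>
      asm a c b z0 z1 z2 z3 z4 i.1) = z2 := by
    funext i
    obtain ⟨i, hi⟩ := i
    simp only [asm]
    split_ifs <;> first | rfl | omega
  rw [e2, repM a c b hac (by omega) hbd, repPre a c b hac (by omega) hbd,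
    repSuf a c b hac (by omega) hbd] at h
  exact h

lemma fact2 (hp : IsMarkov p) (hac : a < c) (hcb : c + 1 < b) (hbd : b ≤ d)
    (x : MidIdx n d a c) (z2 : MidIdx n d c (c+1)) (z3 : MidIdx n d (c+1) b) :
    (∑ z0 : MidIdx n d 0 a, ∑ z4 : MidIdx n d b d, p (asm a c b z0 x z2 z3 z4))
      * Mq a c b p z2
      = (∑ z0 : MidIdx n d 0 a, ∑ w3 : MidIdx n d (c+1) b, ∑ w4 : MidIdx n d b d,
          p (asm a c b z0 x z2 w3 w4))
        * (∑ z4 : MidIdx n d b d, ∑ w0 : MidIdx n d 0 a, ∑ w1 : MidIdx n d a c,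
          p (asm a c b w0 w1 z2 z3 z4)) := by
  rw [Finset.sum_mul_sum]
  rw [Finset.sum_mul]
  refine Finset.sum_congr rfl fun z0 _ => ?_
  rw [Finset.sum_mul]
  refine (Finset.sum_congr rfl fun z4 _ => ?_)
  rw [markovPt a c b hp hac hcb hbd]

lemma Mq_zero (hp : IsMarkov p) (z2 : MidIdx n d c (c+1)) (hM : Mq a c b p z2 = 0)
    (z0 : MidIdx n d 0 a) (z1 : MidIdx n d a c)
    (z3 : MidIdx n d (c+1) b) (z4 : MidIdx n d b d) :
    p (asm a c b z0 z1 z2 z3 z4) = 0 := by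
  have nn := hp.1
  have h0 := (Finset.sum_eq_zero_iff_of_nonneg (fun z0 _ =>
    Finset.sum_nonneg fun z1 _ => Finset.sum_nonneg fun z3 _ =>
      Finset.sum_nonneg fun z4 _ => nn _)).1 hM z0 (Finset.mem_univ _)
  have h1 := (Finset.sum_eq_zero_iff_of_nonneg (fun z1 _ =>
    Finset.sum_nonneg fun z3 _ => Finset.sum_nonneg fun z4 _ => nn _)).1 h0 z1 (Finset.mem_univ _)
  have h3 := (Finset.sum_eq_zero_iff_of_nonneg (fun z3 _ =>
    Finset.sum_nonneg fun z4 _ => nn _)).1 h1 z3 (Finset.mem_univ _)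
  exact (Finset.sum_eq_zero_iff_of_nonneg (fun z4 _ => nn _)).1 h3 z4 (Finset.mem_univ _)

theorem markov_colSpace_eq_aux
    (hp : IsMarkov p) (hac : a < c) (hcb : c < b) (hbd : b ≤ d) :
    colSpace (winMatrix p a c b) = colSpace (winMatrix p a c (c + 1)) := by
  obtain hb1 | hb2 := eq_or_lt_of_le (Nat.succ_le_of_lt hcb)
  · subst hb1; rfl
  have hcb1 : c + 1 ≤ b := le_of_lt hb2
  refine le_antisymm (Submodule.span_le.mpr ?_) (Submodule.span_le.mpr ?_)
  · rintro _ ⟨y, rfl⟩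
    beta_reduce
    by_cases hM : Mq a c b p (pi2 c b hcb1 y) = 0
    · have hz : (fun r => winMatrix p a c b r y) = (0 : MidIdx n d a c → ℝ) := by
        funext x
        rw [repA a c b hac hcb1 hbd]
        exact Finset.sum_eq_zero fun z0 _ => Finset.sum_eq_zero fun z4 _ =>
          Mq_zero a c b hp _ hM _ _ _ _
      rw [hz]
      exact Submodule.zero_mem _
    · have key : (fun r => winMatrix p a c b r y)
          = ((∑ z4 : MidIdx n d b d, ∑ w0 : MidIdx n d 0 a, ∑ w1 : MidIdx n d a c,
              p (asm a c b w0 w1 (pi2 c b hcb1 y) (pi3 c b y) z4)) / Mq a c b p (pi2 c b hcb1 y))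
            • (fun r => winMatrix p a c (c+1) r (pi2 c b hcb1 y)) := by
        funext x
        simp only [Pi.smul_apply, smul_eq_mul]
        rw [repA a c b hac hcb1 hbd, repB a c b hac hcb1 hbd]
        rw [div_mul_eq_mul_div, eq_div_iff hM]
        rw [fact2 a c b hp hac hb2 hbd]
        ring
      rw [key]
      exact Submodule.smul_mem _ _ (Submodule.subset_span ⟨pi2 c b hcb1 y, rfl⟩)
  · rintro _ ⟨w, rfl⟩
    beta_reduce
    have key : (fun r => winMatrix p a c (c+1) r w)
        = ∑ z3 : MidIdx n d (c+1) b, (fun r => winMatrix p a c b r (rho c b w z3)) := by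
      funext x
      rw [Finset.sum_apply]
      rw [repB a c b hac hcb1 hbd]
      rw [Finset.sum_comm]
      refine Finset.sum_congr rfl fun z3 _ => ?_
      rw [repA a c b hac hcb1 hbd, pi2_rho, pi3_rho]
    rw [key]
    exact Submodule.sum_mem _ fun z3 _ =>
      Submodule.subset_span ⟨rho c b w z3, rfl⟩

end


/-- Lemma: column spaces for Markov models.
For a discrete Markov model `p` on `[n_1] × ⋯ × [n_d]` and any `1 ≤ i ≤ k < j ≤ d`
(1-based), the marginal matrix `p((x_i,…,x_k); (x_{k+1},…,x_j))` and the marginal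
matrix `p((x_i,…,x_k); x_{k+1})` have the same column space.
(0-based encoding: rows are the variables in the window `[a, c)` with `a = i - 1`,
`c = k`, columns those in `[c, b)` with `b = j`; so `1 ≤ i ≤ k < j ≤ d` becomes
`a < c < b ≤ d`.) -/
theorem markov_colSpace_eq
    (d : ℕ) (n : ℕ → ℕ) (p : PreIdx n d → ℝ) (hp : IsMarkov p)
    (a c b : ℕ) (hac : a < c) (hcb : c < b) (hbd : b ≤ d) :
    colSpace (winMatrix p a c b) = colSpace (winMatrix p a c (c + 1)) := by
  exact markov_colSpace_eq_aux a c b hp hac hcb hbd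
end

section
/- Let p be a discrete Markov model on [n_1]×⋯×[n_d]. Then for any indices 1 ≤ i ≤ k < j ≤ d, the matrix p((x_i,…,x_k);(x_{k+1},…,x_j)) (the marginal of p on variables x_i,…,x_j, viewed as a matrix with rows indexed by (x_i,…,x_k) and columns by (x_{k+1},…,x_j)) and the matrix p(x_k;(x_{k+1},…,x_j)) (the marginal of p on variables x_k,…,x_j, with rows indexed by x_k and columns by (x_{k+1},…,x_j)) have the same row space. -/
open scoped BigOperators
open Matrix

section MarkovAux

variable {d : ℕ} {n : ℕ → ℕ}

open Classical in
/-- Real-valued indicator of a proposition. -/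
noncomputable def ind (P : Prop) : ℝ := if P then 1 else 0

lemma ind_pos {P : Prop} (h : P) : ind P = 1 := by simp [ind, h]

lemma ind_neg {P : Prop} (h : ¬ P) : ind P = 0 := by simp [ind, h]

lemma ind_nonneg (P : Prop) : 0 ≤ ind P := by
  by_cases h : P <;> simp [ind, h]

lemma ind_congr {P Q : Prop} (h : P ↔ Q) : ind P = ind Q := by
  by_cases hp : P
  · rw [ind_pos hp, ind_pos (h.mp hp)]
  · rw [ind_neg hp, ind_neg (fun hq => hp (h.mpr hq))]

lemma ind_mono {P Q : Prop} (h : P → Q) : ind P ≤ ind Q := by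
  by_cases hp : P
  · rw [ind_pos hp, ind_pos (h hp)]
  · rw [ind_neg hp]; exact ind_nonneg Q

lemma ind_and (P Q : Prop) : ind (P ∧ Q) = ind P * ind Q := by
  by_cases hp : P <;> by_cases hq : Q <;>
    simp [ind, hp, hq]

lemma sum_ind_eq {α : Type*} [Fintype α] (a0 : α) : ∑ a : α, ind (a = a0) = 1 := by
  classical
  rw [Finset.sum_eq_single a0 (fun a _ h => ind_neg h) (by simp)]
  exact ind_pos rfl

/-- Agreement of a full index `w` with the window values `x` on `[a, b)`. -/
def agr (a b : ℕ) (x : MidIdx n d a b) (w : PreIdx n d) : Prop :=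
  ∀ (i : Fin d) (h : a ≤ (i : ℕ) ∧ (i : ℕ) < b), w i = x ⟨i, h⟩

/-- Fill a window value on `[a,b)` with outside values `z` to a full index. -/
def fill (a b : ℕ) (x : MidIdx n d a b)
    (z : ∀ i : {i : Fin d // (i : ℕ) < a ∨ b ≤ (i : ℕ)}, Fin (n i)) : PreIdx n d :=
  fun i => if h : a ≤ (i : ℕ) ∧ (i : ℕ) < b then x ⟨i, h⟩ else z ⟨i, by omega⟩

/-- Marginal as an indicator-weighted sum over all full indices. -/
lemma winMarg_eq_sum (p : PreIdx n d → ℝ) (a b : ℕ) (x : MidIdx n d a b) :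
    winMarg p a b x = ∑ w : PreIdx n d, ind (agr a b x w) * p w := by
  classical
  have h2 : ∑ w : PreIdx n d, ind (agr a b x w) * p w
      = ∑ w ∈ Finset.univ.filter (fun w => agr a b x w), p w := by
    rw [Finset.sum_filter]
    refine Finset.sum_congr rfl fun w _ => ?_
    by_cases h : agr a b x w <;> simp [ind_pos, ind_neg, h]
  rw [h2, winMarg]
  refine Finset.sum_nbij'
    (i := fun z => fill a b x z)
    (j := fun w => fun i => w i.1) ?_ ?_ ?_ ?_ ?_
  · intro z _
    simp only [Finset.mem_filter, Finset.mem_univ, true_and]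
    intro i h
    exact dif_pos h
  · intro w _; exact Finset.mem_univ _
  · intro z _
    funext i
    have hi : ((i : Fin d) : ℕ) < a ∨ b ≤ ((i : Fin d) : ℕ) := i.2
    have h3 : ¬ (a ≤ ((i : Fin d) : ℕ) ∧ ((i : Fin d) : ℕ) < b) := by omega
    show fill a b x z i.1 = z i
    rw [fill, dif_neg h3]
  · intro w hw
    simp only [Finset.mem_filter, Finset.mem_univ, true_and] at hw
    funext i
    show fill a b x (fun j => w j.1) i = w i
    by_cases h : a ≤ (i : ℕ) ∧ (i : ℕ) < b
    · rw [fill, dif_pos h]; exact (hw i h).symm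
    · rw [fill, dif_neg h]
  · intro z _; rfl


/-- Concatenate window values on `[a,c)` and `[c,b)` into `[a,b)`. -/
def pairMid {a c b : ℕ} (x : MidIdx n d a c) (y : MidIdx n d c b) : MidIdx n d a b :=
  fun i => if h : (i : ℕ) < c then x ⟨i.1, ⟨i.2.1, h⟩⟩
    else y ⟨i.1, ⟨Nat.le_of_not_lt h, i.2.2⟩⟩

lemma winMatrix_eq_winMarg (p : PreIdx n d → ℝ) (a c b : ℕ) (hac : a ≤ c) (hcb : c ≤ b)
    (x : MidIdx n d a c) (y : MidIdx n d c b) :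
    winMatrix p a c b x y = winMarg p a b (pairMid x y) := by
  show (∑ z : ∀ i : {i : Fin d // (i : ℕ) < a ∨ b ≤ (i : ℕ)}, Fin (n i), _) = _
  rw [winMarg]
  refine Finset.sum_congr rfl fun z _ => congrArg p (funext fun i => ?_)
  by_cases h1 : a ≤ (i : ℕ) ∧ (i : ℕ) < c
  · have hb : a ≤ (i : ℕ) ∧ (i : ℕ) < b := ⟨h1.1, lt_of_lt_of_le h1.2 hcb⟩
    rw [dif_pos h1, dif_pos hb]
    show _ = pairMid x y ⟨i, hb⟩
    rw [pairMid]
    rw [dif_pos h1.2]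
  · by_cases h2 : c ≤ (i : ℕ) ∧ (i : ℕ) < b
    · have hb : a ≤ (i : ℕ) ∧ (i : ℕ) < b := ⟨le_trans hac h2.1, h2.2⟩
      rw [dif_neg h1, dif_pos h2, dif_pos hb]
      show _ = pairMid x y ⟨i, hb⟩
      rw [pairMid, dif_neg (not_lt.mpr h2.1)]
    · have hb : ¬ (a ≤ (i : ℕ) ∧ (i : ℕ) < b) := by omega
      rw [dif_neg h1, dif_neg h2, dif_neg hb]

lemma agr_pairMid {a c b : ℕ} (hac : a ≤ c) (hcb : c ≤ b)
    (x : MidIdx n d a c) (y : MidIdx n d c b) (w : PreIdx n d) :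
    agr a b (pairMid x y) w ↔ (agr a c x w ∧ agr c b y w) := by
  constructor
  · intro h
    constructor
    · intro i hi
      have hb : a ≤ (i : ℕ) ∧ (i : ℕ) < b := ⟨hi.1, lt_of_lt_of_le hi.2 hcb⟩
      have h' := h i hb
      rw [show pairMid x y ⟨i, hb⟩ = x ⟨i, hi⟩ from by rw [pairMid, dif_pos hi.2]] at h'
      exact h'
    · intro i hi
      have hb : a ≤ (i : ℕ) ∧ (i : ℕ) < b := ⟨hac.trans hi.1, hi.2⟩
      have h' := h i hb
      rw [show pairMid x y ⟨i, hb⟩ = y ⟨i, hi⟩ from by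
        rw [pairMid, dif_neg (not_lt.mpr hi.1)]] at h'
      exact h'
  · rintro ⟨h1, h2⟩ i hi
    show w i = pairMid x y ⟨i, hi⟩
    rw [pairMid]
    by_cases hc : (i : ℕ) < c
    · rw [dif_pos hc]; exact h1 i ⟨hi.1, hc⟩
    · rw [dif_neg hc]; exact h2 i ⟨Nat.le_of_not_lt hc, hi.2⟩

lemma winMatrix_eq_sum (p : PreIdx n d → ℝ) (a c b : ℕ) (hac : a ≤ c) (hcb : c ≤ b)
    (x : MidIdx n d a c) (y : MidIdx n d c b) :
    winMatrix p a c b x y = ∑ w : PreIdx n d, ind (agr a c x w ∧ agr c b y w) * p w := by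
  rw [winMatrix_eq_winMarg p a c b hac hcb x y, winMarg_eq_sum]
  exact Finset.sum_congr rfl fun w _ => by rw [ind_congr (agr_pairMid hac hcb x y w)]

lemma sum_agr_unique (a b : ℕ) (w : PreIdx n d) :
    ∑ v : MidIdx n d a b, ind (agr a b v w) = 1 := by
  have h : ∀ v : MidIdx n d a b, agr a b v w ↔
      v = fun i : {i : Fin d // a ≤ (i : ℕ) ∧ (i : ℕ) < b} => w i.1 := by
    intro v
    constructor
    · intro h; funext i; exact (h i.1 i.2).symm
    · rintro rfl i hi; rfl
  calc ∑ v : MidIdx n d a b, ind (agr a b v w)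
      = ∑ v : MidIdx n d a b,
          ind (v = fun i : {i : Fin d // a ≤ (i : ℕ) ∧ (i : ℕ) < b} => w i.1) :=
        Finset.sum_congr rfl fun v _ => ind_congr (h v)
    _ = 1 := sum_ind_eq _

lemma winMatrix_row_sum (p : PreIdx n d → ℝ) (a e c b : ℕ) (hae : a ≤ e) (hec : e ≤ c)
    (hcb : c ≤ b) (x' : MidIdx n d e c) (y : MidIdx n d c b) :
    winMatrix p e c b x' y = ∑ v : MidIdx n d a e, winMatrix p a c b (pairMid v x') y := by
  symm
  calc ∑ v : MidIdx n d a e, winMatrix p a c b (pairMid v x') y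
      = ∑ v : MidIdx n d a e, ∑ w : PreIdx n d,
          ind (agr a e v w) * (ind (agr e c x' w ∧ agr c b y w) * p w) := by
        refine Finset.sum_congr rfl fun v _ => ?_
        rw [winMatrix_eq_sum p a c b (hae.trans hec) hcb]
        refine Finset.sum_congr rfl fun w _ => ?_
        rw [ind_congr (and_congr_left' (agr_pairMid hae hec v x' w)),
          ind_congr and_assoc, ind_and, mul_assoc]
    _ = ∑ w : PreIdx n d, (∑ v : MidIdx n d a e, ind (agr a e v w)) *
          (ind (agr e c x' w ∧ agr c b y w) * p w) := by
        rw [Finset.sum_comm]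
        exact Finset.sum_congr rfl fun w _ => (Finset.sum_mul _ _ _).symm
    _ = winMatrix p e c b x' y := by
        rw [winMatrix_eq_sum p e c b hec hcb]
        exact Finset.sum_congr rfl fun w _ => by rw [sum_agr_unique, one_mul]


/-- Join two full indices, taking `u` below `c` and `v` from `c` on. -/
def joinAt (c : ℕ) (u v : PreIdx n d) : PreIdx n d :=
  fun i => if (i : ℕ) < c then u i else v i

/-- Restriction of a window value on `[a,c)` to `[e,c)`. -/
def res1 {a c : ℕ} (e : ℕ) (hae : a ≤ e) (x : MidIdx n d a c) : MidIdx n d e c :=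
  fun i => x ⟨i.1, ⟨hae.trans i.2.1, i.2.2⟩⟩

lemma inner_count {a c b e : ℕ} (hce : c = e + 1) (he : e < d)
    (x : MidIdx n d a c) (y : MidIdx n d c b) (u v : PreIdx n d) :
    (∑ w : PreIdx n d, ind ((agr a c x w ∧ agr c b y w) ∧
        (∀ i : Fin d, (i : ℕ) < c → u i = w i) ∧
        (∀ i : Fin d, e ≤ (i : ℕ) → v i = w i))) =
      ind ((agr a c x u ∧ agr c b y v) ∧ u ⟨e, he⟩ = v ⟨e, he⟩) := by
  classical
  by_cases huv : u ⟨e, he⟩ = v ⟨e, he⟩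
  · have hD : ∀ w : PreIdx n d,
        ((∀ i : Fin d, (i : ℕ) < c → u i = w i) ∧
          (∀ i : Fin d, e ≤ (i : ℕ) → v i = w i)) ↔ w = joinAt c u v := by
      intro w
      constructor
      · rintro ⟨h1, h2⟩
        funext i
        show w i = joinAt c u v i
        rw [joinAt]
        by_cases hic : (i : ℕ) < c
        · rw [if_pos hic]; exact (h1 i hic).symm
        · rw [if_neg hic]; exact (h2 i (by omega)).symm
      · rintro rfl
        refine ⟨fun i hic => ?_, fun i hei => ?_⟩
        · show u i = joinAt c u v i
          rw [joinAt, if_pos hic]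
        · show v i = joinAt c u v i
          rw [joinAt]
          by_cases hic : (i : ℕ) < c
          · rw [if_pos hic]
            have hie : i = ⟨e, he⟩ := Fin.ext (show (i : ℕ) = e from by omega)
            rw [hie]
            exact huv.symm
          · rw [if_neg hic]
    have hju : ∀ (i : Fin d), (i : ℕ) < c → joinAt c u v i = u i := by
      intro i h; rw [joinAt, if_pos h]
    have hjv : ∀ (i : Fin d), c ≤ (i : ℕ) → joinAt c u v i = v i := by
      intro i h; rw [joinAt, if_neg (not_lt.mpr h)]
    calc (∑ w : PreIdx n d, ind ((agr a c x w ∧ agr c b y w) ∧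
            (∀ i : Fin d, (i : ℕ) < c → u i = w i) ∧
            (∀ i : Fin d, e ≤ (i : ℕ) → v i = w i)))
        = ∑ w : PreIdx n d,
            ind ((agr a c x w ∧ agr c b y w) ∧ w = joinAt c u v) :=
          Finset.sum_congr rfl fun w _ => ind_congr (and_congr_right' (hD w))
      _ = ind (agr a c x (joinAt c u v) ∧ agr c b y (joinAt c u v)) := by
          rw [Finset.sum_eq_single (joinAt c u v)
            (fun w _ hw => ind_neg fun hC => hw hC.2) (by simp)]
          exact ind_congr (and_iff_left rfl)
      _ = ind ((agr a c x u ∧ agr c b y v) ∧ u ⟨e, he⟩ = v ⟨e, he⟩) := by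
          refine ind_congr ?_
          have h1 : agr a c x (joinAt c u v) ↔ agr a c x u := by
            constructor
            · intro h i hi
              have h' := h i hi
              rwa [hju i hi.2] at h'
            · intro h i hi
              rw [hju i hi.2]; exact h i hi
          have h2 : agr c b y (joinAt c u v) ↔ agr c b y v := by
            constructor
            · intro h i hi
              have h' := h i hi
              rwa [hjv i hi.1] at h'
            · intro h i hi
              rw [hjv i hi.1]; exact h i hi
          exact ⟨fun h => ⟨⟨h1.mp h.1, h2.mp h.2⟩, huv⟩,
            fun h => ⟨h1.mpr h.1.1, h2.mpr h.1.2⟩⟩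
  · rw [ind_neg (fun h => huv h.2)]
    refine Finset.sum_eq_zero fun w _ => ind_neg ?_
    rintro ⟨-, h1, h2⟩
    exact huv ((h1 ⟨e, he⟩ (show e < c from by omega)).trans
      (h2 ⟨e, he⟩ (le_refl e)).symm)

lemma markov_factor (p : PreIdx n d → ℝ) (hp : IsMarkov p) {a b e : ℕ} (hae : a ≤ e)
    (hc2 : 2 ≤ e + 1) (hcb : e + 1 ≤ b) (hbd : b ≤ d) (hcd1 : e + 1 ≤ d - 1)
    (x : MidIdx n d a (e + 1)) (y : MidIdx n d (e + 1) b) :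
    winMatrix p a (e + 1) b x y * winMarg p e (e + 1) (res1 e hae x) =
      winMarg p a (e + 1) x * winMatrix p e (e + 1) b (res1 e hae x) y := by
  classical
  have he : e < d := by omega
  have hac : a ≤ e + 1 := by omega
  have hec : e ≤ e + 1 := by omega
  obtain ⟨hp0, hp1, hM⟩ := hp
  have hMk := hM (e + 1) hc2 hcd1
  have key : ∀ w : PreIdx n d,
      ind (agr a (e+1) x w ∧ agr (e+1) b y w) * p w * winMarg p e (e+1) (res1 e hae x)
        = ind (agr a (e+1) x w ∧ agr (e+1) b y w) *
            (winMarg p 0 (e+1) (fun i => w i.1) * winMarg p e d (fun i => w i.1)) := by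
    intro w
    by_cases hw : agr a (e+1) x w ∧ agr (e+1) b y w
    · rw [ind_pos hw, one_mul, one_mul]
      have harg : res1 e hae x =
          (fun i : {i : Fin d // e ≤ (i : ℕ) ∧ (i : ℕ) < e + 1} => w i.1) := by
        funext i
        exact (hw.1 i.1 ⟨hae.trans i.2.1, i.2.2⟩).symm
      rw [harg]
      exact hMk w
    · rw [ind_neg hw]; ring
  have hag1 : ∀ w u : PreIdx n d,
      agr 0 (e+1) (fun i : {i : Fin d // 0 ≤ (i : ℕ) ∧ (i : ℕ) < e + 1} => w i.1) u ↔
        ∀ i : Fin d, (i : ℕ) < e + 1 → u i = w i :=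
    fun w u => ⟨fun h i hi => h i ⟨Nat.zero_le _, hi⟩, fun h i hi => h i hi.2⟩
  have hag2 : ∀ w v : PreIdx n d,
      agr e d (fun i : {i : Fin d // e ≤ (i : ℕ) ∧ (i : ℕ) < d} => w i.1) v ↔
        ∀ i : Fin d, e ≤ (i : ℕ) → v i = w i :=
    fun w v => ⟨fun h i hi => h i ⟨hi, i.isLt⟩, fun h i hi => h i hi.1⟩
  have hiff : ∀ u v : PreIdx n d,
      ((agr a (e+1) x u ∧ agr (e+1) b y v) ∧ u ⟨e, he⟩ = v ⟨e, he⟩) ↔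
        (agr a (e+1) x u ∧ (agr e (e+1) (res1 e hae x) v ∧ agr (e+1) b y v)) := by
    intro u v
    have hsing : ∀ v : PreIdx n d, agr e (e+1) (res1 e hae x) v ↔
        v ⟨e, he⟩ = x ⟨⟨e, he⟩, ⟨hae, Nat.lt_succ_self e⟩⟩ := by
      intro v
      constructor
      · intro h
        exact h ⟨e, he⟩ ⟨le_refl e, Nat.lt_succ_self e⟩
      · intro h i hi
        have hie : i = ⟨e, he⟩ := Fin.ext (show (i : ℕ) = e from by omega)
        subst hie
        exact h
    constructor
    · rintro ⟨⟨hxu, hyv⟩, huv⟩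
      refine ⟨hxu, (hsing v).mpr ?_, hyv⟩
      rw [← huv]
      exact hxu ⟨e, he⟩ ⟨hae, Nat.lt_succ_self e⟩
    · rintro ⟨hxu, hv, hyv⟩
      refine ⟨⟨hxu, hyv⟩, ?_⟩
      rw [(hsing v).mp hv]
      exact hxu ⟨e, he⟩ ⟨hae, Nat.lt_succ_self e⟩
  calc winMatrix p a (e+1) b x y * winMarg p e (e+1) (res1 e hae x)
      = ∑ w : PreIdx n d, ind (agr a (e+1) x w ∧ agr (e+1) b y w) * p w *
          winMarg p e (e+1) (res1 e hae x) := by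
        rw [winMatrix_eq_sum p a (e+1) b hac hcb x y, Finset.sum_mul]
    _ = ∑ w : PreIdx n d, ind (agr a (e+1) x w ∧ agr (e+1) b y w) *
          (winMarg p 0 (e+1) (fun i => w i.1) * winMarg p e d (fun i => w i.1)) :=
        Finset.sum_congr rfl fun w _ => key w
    _ = ∑ w : PreIdx n d, ∑ u : PreIdx n d, ∑ v : PreIdx n d,
          ind (agr a (e+1) x w ∧ agr (e+1) b y w) *
            ((ind (∀ i : Fin d, (i : ℕ) < e + 1 → u i = w i) * p u) *
             (ind (∀ i : Fin d, e ≤ (i : ℕ) → v i = w i) * p v)) := by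
        refine Finset.sum_congr rfl fun w _ => ?_
        have e1 : winMarg p 0 (e+1) (fun i => w i.1) =
            ∑ u : PreIdx n d, ind (∀ i : Fin d, (i : ℕ) < e + 1 → u i = w i) * p u := by
          rw [winMarg_eq_sum]
          exact Finset.sum_congr rfl fun u _ => by rw [ind_congr (hag1 w u)]
        have e2 : winMarg p e d (fun i => w i.1) =
            ∑ v : PreIdx n d, ind (∀ i : Fin d, e ≤ (i : ℕ) → v i = w i) * p v := by
          rw [winMarg_eq_sum]
          exact Finset.sum_congr rfl fun v _ => by rw [ind_congr (hag2 w v)]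
        rw [e1, e2, Finset.sum_mul_sum, Finset.mul_sum]
        exact Finset.sum_congr rfl fun u _ => by rw [Finset.mul_sum]
    _ = ∑ u : PreIdx n d, ∑ v : PreIdx n d, ∑ w : PreIdx n d,
          ind (agr a (e+1) x w ∧ agr (e+1) b y w) *
            ((ind (∀ i : Fin d, (i : ℕ) < e + 1 → u i = w i) * p u) *
             (ind (∀ i : Fin d, e ≤ (i : ℕ) → v i = w i) * p v)) := by
        rw [Finset.sum_comm]
        exact Finset.sum_congr rfl fun u _ => Finset.sum_comm
    _ = ∑ u : PreIdx n d, ∑ v : PreIdx n d, (p u * p v) *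
          ∑ w : PreIdx n d, ind ((agr a (e+1) x w ∧ agr (e+1) b y w) ∧
            (∀ i : Fin d, (i : ℕ) < e + 1 → u i = w i) ∧
            (∀ i : Fin d, e ≤ (i : ℕ) → v i = w i)) := by
        refine Finset.sum_congr rfl fun u _ => Finset.sum_congr rfl fun v _ => ?_
        rw [Finset.mul_sum]
        refine Finset.sum_congr rfl fun w _ => ?_
        simp only [ind_and]
        ring
    _ = ∑ u : PreIdx n d, ∑ v : PreIdx n d, (p u * p v) *
          ind ((agr a (e+1) x u ∧ agr (e+1) b y v) ∧ u ⟨e, he⟩ = v ⟨e, he⟩) := by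
        refine Finset.sum_congr rfl fun u _ => Finset.sum_congr rfl fun v _ => ?_
        rw [inner_count rfl he x y u v]
    _ = ∑ u : PreIdx n d, ∑ v : PreIdx n d,
          (ind (agr a (e+1) x u) * p u) *
            (ind (agr e (e+1) (res1 e hae x) v ∧ agr (e+1) b y v) * p v) := by
        refine Finset.sum_congr rfl fun u _ => Finset.sum_congr rfl fun v _ => ?_
        rw [ind_congr (hiff u v), ind_and]
        ring
    _ = winMarg p a (e+1) x * winMatrix p e (e+1) b (res1 e hae x) y := by
        rw [winMarg_eq_sum p a (e+1) x, winMatrix_eq_sum p e (e+1) b hec hcb,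
          Finset.sum_mul_sum]

lemma winMatrix_nonneg (p : PreIdx n d → ℝ) (hp0 : ∀ w, 0 ≤ p w) {a c b : ℕ}
    (hac : a ≤ c) (hcb : c ≤ b) (x : MidIdx n d a c) (y : MidIdx n d c b) :
    0 ≤ winMatrix p a c b x y := by
  rw [winMatrix_eq_sum p a c b hac hcb]
  exact Finset.sum_nonneg fun w _ => mul_nonneg (ind_nonneg _) (hp0 w)

lemma winMatrix_le_marg (p : PreIdx n d → ℝ) (hp0 : ∀ w, 0 ≤ p w) {a e c b : ℕ}
    (hae : a ≤ e) (hec : e ≤ c) (hcb : c ≤ b) (x : MidIdx n d a c) (y : MidIdx n d c b) :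
    winMatrix p a c b x y ≤ winMarg p e c (res1 e hae x) := by
  rw [winMatrix_eq_sum p a c b (hae.trans hec) hcb, winMarg_eq_sum]
  refine Finset.sum_le_sum fun w _ => mul_le_mul_of_nonneg_right (ind_mono ?_) (hp0 w)
  rintro ⟨h1, -⟩ i hi
  exact h1 i ⟨hae.trans hi.1, hi.2⟩

end MarkovAux
/-- Lemma: row spaces for Markov models.
For a discrete Markov model `p` on `[n_1] × ⋯ × [n_d]` and any `1 ≤ i ≤ k < j ≤ d`
(1-based), the marginal matrix `p((x_i,…,x_k); (x_{k+1},…,x_j))` and the marginal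
matrix `p(x_k; (x_{k+1},…,x_j))` have the same row space.
(0-based encoding: rows are the variables in the window `[a, c)` with `a = i - 1`,
`c = k`, columns those in `[c, b)` with `b = j`; so `1 ≤ i ≤ k < j ≤ d` becomes
`a < c < b ≤ d`, and the single-row-variable matrix has rows in `[c-1, c)`.) -/
theorem markov_rowSpace_eq
    (d : ℕ) (n : ℕ → ℕ) (p : PreIdx n d → ℝ) (hp : IsMarkov p)
    (a c b : ℕ) (hac : a < c) (hcb : c < b) (hbd : b ≤ d) :
    rowSpace (winMatrix p a c b) = rowSpace (winMatrix p (c - 1) c b) := by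
  classical
  by_cases heq : a = c - 1
  · subst heq; rfl
  · have hlt : a < c - 1 := by omega
    obtain ⟨e, rfl⟩ : ∃ e, c = e + 1 := ⟨c - 1, by omega⟩
    have hae : a ≤ e := by omega
    apply le_antisymm
    · rw [rowSpace, rowSpace]
      refine Submodule.span_le.mpr ?_
      rintro f ⟨x, rfl⟩
      by_cases hm : winMarg p e (e + 1) (res1 e hae x) = 0
      · have hz : (fun y => winMatrix p a (e + 1) b x y) = 0 := by
          funext y
          have h1 := winMatrix_nonneg p hp.1 (show a ≤ e + 1 by omega)
            (le_of_lt hcb) x y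
          have h2 := winMatrix_le_marg p hp.1 hae (Nat.le_succ e)
            (le_of_lt hcb) x y
          have h3 : winMatrix p a (e + 1) b x y ≤ 0 := hm ▸ h2
          exact le_antisymm h3 h1
        show (fun y => winMatrix p a (e + 1) b x y) ∈ _
        rw [hz]
        exact Submodule.zero_mem _
      · have hkey : ∀ y, winMatrix p a (e + 1) b x y =
            (winMarg p a (e + 1) x / winMarg p e (e + 1) (res1 e hae x)) *
              winMatrix p e (e + 1) b (res1 e hae x) y := by
          intro y
          have h := markov_factor p hp hae (by omega) (by omega) hbd (by omega) x y
          rw [div_mul_eq_mul_div, eq_div_iff hm]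
          exact h
        have hfun : (fun y => winMatrix p a (e + 1) b x y) =
            (winMarg p a (e + 1) x / winMarg p e (e + 1) (res1 e hae x)) •
              (fun y => winMatrix p e (e + 1) b (res1 e hae x) y) := by
          funext y
          simp only [Pi.smul_apply, smul_eq_mul]
          exact hkey y
        show (fun y => winMatrix p a (e + 1) b x y) ∈ _
        rw [hfun]
        exact Submodule.smul_mem _ _ (Submodule.subset_span ⟨res1 e hae x, rfl⟩)
    · rw [rowSpace, rowSpace]
      refine Submodule.span_le.mpr ?_
      rintro f ⟨x', rfl⟩
      have hrow : (fun y => winMatrix p (e + 1 - 1) (e + 1) b x' y) =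
          ∑ v : MidIdx n d a e, (fun y => winMatrix p a (e + 1) b (pairMid v x') y) := by
        funext y
        rw [Finset.sum_apply]
        exact winMatrix_row_sum p a e (e + 1) b hae (Nat.le_succ e) (le_of_lt hcb) x' y
      show (fun y => winMatrix p (e + 1 - 1) (e + 1) b x' y) ∈ _
      rw [hrow]
      exact Submodule.sum_mem _ fun v _ => Submodule.subset_span ⟨pairMid v x', rfl⟩
end

section
/- Let p be a discrete Markov model on [n_1]×⋯×[n_d] and let 1 ≤ k ≤ d−1. Then the rank of the k-th unfolding matrix p((x_1,…,x_k);(x_{k+1},…,x_d)) equals the rank of the matrix p(x_k;x_{k+1}) (the marginal of p on the pair (x_k,x_{k+1}), viewed as an n_k × n_{k+1} matrix), and, when 2 ≤ k ≤ d−1, it also equals the rank of the matrix p((x_{k−1},x_k);x_{k+1}) (the marginal of p on (x_{k−1},x_k,x_{k+1}), viewed as a matrix with rows indexed by (x_{k−1},x_k) and columns by x_{k+1}). -/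
open scoped BigOperators
open Matrix

section helpers

lemma colSpace_eq_range {R C : Type*} [Fintype C] (M : Matrix R C ℝ) :
    colSpace M = LinearMap.range M.mulVecLin := by
  rw [Matrix.range_mulVecLin]; rfl

lemma mrank_eq_rank {R C : Type*} [Fintype R] [Fintype C] (M : Matrix R C ℝ) :
    mrank M = M.rank := by
  rw [mrank, colSpace_eq_range, Matrix.rank]

lemma mrank_transpose {R C : Type*} [Fintype R] [Fintype C] (M : Matrix R C ℝ) :
    mrank Mᵀ = mrank M := by
  rw [mrank_eq_rank, mrank_eq_rank, Matrix.rank_transpose]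

lemma colSpace_eq_of_mem {R C C' : Type*} (M : Matrix R C ℝ) (N : Matrix R C' ℝ)
    (h1 : ∀ c, (fun r => M r c) ∈ colSpace N)
    (h2 : ∀ c', (fun r => N r c') ∈ colSpace M) : colSpace M = colSpace N := by
  apply le_antisymm <;> rw [colSpace, Submodule.span_le] <;>
    rw [Set.range_subset_iff] <;> assumption

lemma mrank_eq_of_cols {R C C' : Type*} (M : Matrix R C ℝ) (N : Matrix R C' ℝ)
    (h1 : ∀ c, (fun r => M r c) ∈ colSpace N)
    (h2 : ∀ c', (fun r => N r c') ∈ colSpace M) : mrank M = mrank N := by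
  rw [mrank, mrank, colSpace_eq_of_mem M N h1 h2]

lemma rowSpace_eq_colSpace_transpose {R C : Type*} (M : Matrix R C ℝ) :
    rowSpace M = colSpace Mᵀ := rfl

lemma mrank_eq_of_rows {R R' C : Type*} [Fintype R] [Fintype R'] [Fintype C]
    (M : Matrix R C ℝ) (N : Matrix R' C ℝ)
    (h1 : ∀ r, (fun c => M r c) ∈ rowSpace N)
    (h2 : ∀ r', (fun c => N r' c) ∈ rowSpace M) : mrank M = mrank N := by
  rw [← mrank_transpose M, ← mrank_transpose N]
  exact mrank_eq_of_cols Mᵀ Nᵀ h1 h2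

lemma sum_pi_split {ι : Type*} [Fintype ι] [DecidableEq ι] (nn : ι → ℕ)
    (C D E : ι → Prop) [DecidablePred C] [DecidablePred D] [DecidablePred E]
    (hE : ∀ i, E i ↔ C i ∨ D i) (hdisj : ∀ i, C i → D i → False)
    (f : (∀ i : {i // E i}, Fin (nn i)) → ℝ) :
    ∑ v, f v = ∑ z : ∀ i : {i // C i}, Fin (nn i), ∑ w : ∀ i : {i // D i}, Fin (nn i),
      f (fun i => if h : C i.1 then z ⟨i.1, h⟩ else w ⟨i.1, ((hE i.1).mp i.2).resolve_left h⟩) := by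
  let e : ((∀ i : {i // C i}, Fin (nn i)) × (∀ i : {i // D i}, Fin (nn i))) ≃
      (∀ i : {i // E i}, Fin (nn i)) :=
    { toFun := fun zw i => if h : C i.1 then zw.1 ⟨i.1, h⟩
        else zw.2 ⟨i.1, ((hE i.1).mp i.2).resolve_left h⟩
      invFun := fun v => (fun i => v ⟨i.1, (hE i.1).mpr (Or.inl i.2)⟩,
        fun i => v ⟨i.1, (hE i.1).mpr (Or.inr i.2)⟩)
      left_inv := by
        rintro ⟨z, w⟩
        refine Prod.ext ?_ ?_ <;> funext i
        · simp only [dif_pos i.2]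
        · simp only [dif_neg (fun h => hdisj i.1 h i.2)]
      right_inv := by
        intro v; funext i
        by_cases h : C i.1
        · simp only [dif_pos h]
        · simp only [dif_neg h] }
  rw [← Equiv.sum_comp e f, Fintype.sum_prod_type]
  rfl

end helpers


section winmarg
variable {n : ℕ → ℕ} {d : ℕ}

lemma winMarg_nonneg (p : PreIdx n d → ℝ) (hpos : ∀ x, 0 ≤ p x) (a b : ℕ)
    (q : MidIdx n d a b) : 0 ≤ winMarg p a b q :=
  Finset.sum_nonneg fun _ _ => hpos _

lemma winMarg_eq_zero (p : PreIdx n d → ℝ) (hpos : ∀ x, 0 ≤ p x) {a b : ℕ}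
    {x : PreIdx n d} (h : winMarg p a b (fun i => x i.1) = 0) : p x = 0 := by
  rw [winMarg] at h
  have h2 := (Finset.sum_eq_zero_iff_of_nonneg (fun z _ => hpos _)).mp h
    (fun i => x i.1) (Finset.mem_univ _)
  convert h2 using 2
  funext i
  split <;> rfl

end winmarg

section mainlemmas
variable {n : ℕ → ℕ} {d : ℕ}

/-- Glue a value at position `c-1` with a suffix starting at `c` into a window `[c-1,d)`. -/
def mcat (c : ℕ) (a : MidIdx n d (c-1) c) (y : SufIdx n d c) : MidIdx n d (c-1) d :=
  fun i => if h : (i.1 : ℕ) < c then a ⟨i.1, ⟨i.2.1, h⟩⟩ else y ⟨i.1, Nat.le_of_not_lt h⟩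

/-- The marginal of `p` over the variables `< c-1`, as a matrix `x_{c-1} × (x_c,…,x_{d-1})`. -/
noncomputable def Nmat (p : PreIdx n d → ℝ) (c : ℕ) :
    Matrix (MidIdx n d (c-1) c) (SufIdx n d c) ℝ :=
  Matrix.of fun a y => winMarg p (c-1) d (mcat c a y)

def Xext (c : ℕ) (hcd : c ≤ d) (a : MidIdx n d (c-1) c)
    (z : ∀ i : {i : Fin d // (i : ℕ) < c - 1 ∨ d ≤ (i : ℕ)}, Fin (n i)) : PreIdx n c :=
  fun j => if h : (j : ℕ) < c - 1
    then z ⟨⟨j.1, lt_of_lt_of_le j.isLt hcd⟩, Or.inl h⟩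
    else a ⟨⟨j.1, lt_of_lt_of_le j.isLt hcd⟩, ⟨Nat.le_of_not_lt h, j.isLt⟩⟩

lemma stepA (p : PreIdx n d → ℝ) (hpos : ∀ x, 0 ≤ p x)
    (hM : ∀ k : ℕ, 2 ≤ k → k ≤ d - 1 → ∀ x : PreIdx n d,
      p x * winMarg p (k - 1) k (fun i => x i.1) =
        winMarg p 0 k (fun i => x i.1) * winMarg p (k - 1) d (fun i => x i.1))
    (c : ℕ) (hc1 : 1 ≤ c) (hc2 : c ≤ d - 1) (hd : 2 ≤ d) :
    mrank (unfold p c) = mrank (Nmat p c) := by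
  have hcd : c ≤ d := by omega
  apply mrank_eq_of_rows
  · -- every row of the unfolding is a multiple of a row of Nmat
    intro x
    set a : MidIdx n d (c-1) c := fun i => x ⟨i.1.1, i.2.2⟩ with ha
    by_cases hc : 2 ≤ c
    · by_cases hq : winMarg p (c-1) c a = 0
      · have hz : (fun y => unfold p c x y) = 0 := by
          funext y
          show p (glue x y) = 0
          apply winMarg_eq_zero p hpos (a := c-1) (b := c)
          convert hq using 2
          funext i
          show glue x y i.1 = a i
          rw [glue, dif_pos i.2.2]
        rw [hz]; exact Submodule.zero_mem _
      · have key : (fun y => unfold p c x y) =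
            (winMarg p 0 c (fun i => x ⟨i.1.1, i.2.2⟩) / winMarg p (c-1) c a) •
              (fun y => Nmat p c a y) := by
          funext y
          have hMk := hM c hc hc2 (glue x y)
          have e1 : (fun i : {i : Fin d // c - 1 ≤ (i : ℕ) ∧ (i : ℕ) < c} =>
              glue x y i.1) = a := by
            funext i; show glue x y i.1 = a i; rw [glue, dif_pos i.2.2]
          have e2 : (fun i : {i : Fin d // 0 ≤ (i : ℕ) ∧ (i : ℕ) < c} =>
              glue x y i.1) = (fun i : {i : Fin d // 0 ≤ (i : ℕ) ∧ (i : ℕ) < c} => x ⟨i.1.1, i.2.2⟩) := by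
            funext i; show glue x y i.1 = _; rw [glue, dif_pos i.2.2]
          have e3 : (fun i : {i : Fin d // c - 1 ≤ (i : ℕ) ∧ (i : ℕ) < d} =>
              glue x y i.1) = mcat c a y := by
            funext i
            show glue x y i.1 = _
            have hid := i.1.isLt
            simp only [glue, mcat]
            all_goals first | rfl | (split_ifs <;> first | rfl | omega)
          rw [e1, e2, e3] at hMk
          show p (glue x y) = _ * Nmat p c a y
          rw [div_mul_eq_mul_div, eq_div_iff hq]
          exact hMk
        rw [key]
        exact Submodule.smul_mem _ _ (Submodule.subset_span ⟨a, rfl⟩)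
    · -- c = 1
      have hc1' : c = 1 := by omega
      subst hc1'
      apply Submodule.subset_span
      refine ⟨a, ?_⟩
      funext y
      show Nmat p 1 a y = p (glue x y)
      show winMarg p 0 d (mcat 1 a y) = p (glue x y)
      haveI : IsEmpty {i : Fin d // (i : ℕ) < 0 ∨ d ≤ (i : ℕ)} :=
        ⟨fun i => by have := i.1.isLt; omega⟩
      rw [winMarg, Fintype.sum_unique]
      congr 1
      funext i
      have hid := i.isLt
      simp only [glue, mcat]
      all_goals first | rfl | (split_ifs <;> first | rfl | omega)
  · -- every row of Nmat is a sum of rows of the unfolding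
    intro a
    have key : (fun y => Nmat p c a y) =
        ∑ z : ∀ i : {i : Fin d // (i : ℕ) < c - 1 ∨ d ≤ (i : ℕ)}, Fin (n i),
          (fun y => unfold p c (Xext c hcd a z) y) := by
      funext y
      rw [Finset.sum_apply]
      show winMarg p (c-1) d (mcat c a y) = _
      rw [winMarg]
      refine Finset.sum_congr rfl fun z _ => ?_
      show p _ = p (glue (Xext c hcd a z) y)
      congr 1
      funext i
      have hid := i.isLt
      simp only [glue, mcat, Xext]
      all_goals first | rfl | (split_ifs <;> first | rfl | omega)
    rw [key]
    exact Submodule.sum_mem _ fun z _ => Submodule.subset_span ⟨Xext c hcd a z, rfl⟩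

def ycut (c : ℕ) (y : SufIdx n d c) : MidIdx n d c (c+1) := fun i => y ⟨i.1, i.2.1⟩

def ysuf (c : ℕ) (y : SufIdx n d c) : MidIdx n d c d := fun i => y ⟨i.1, i.2.1⟩

def Yext (c : ℕ) (b : MidIdx n d c (c+1))
    (w : ∀ i : {i : Fin d // c + 1 ≤ (i : ℕ)}, Fin (n i.1)) : SufIdx n d c :=
  fun i => if h : (i.1 : ℕ) < c + 1 then b ⟨i.1, ⟨i.2, h⟩⟩ else w ⟨i.1, Nat.le_of_not_lt h⟩

lemma stepB_key (p : PreIdx n d → ℝ)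
    (hM : ∀ k : ℕ, 2 ≤ k → k ≤ d - 1 → ∀ x : PreIdx n d,
      p x * winMarg p (k - 1) k (fun i => x i.1) =
        winMarg p 0 k (fun i => x i.1) * winMarg p (k - 1) d (fun i => x i.1))
    (c : ℕ) (hc1 : 1 ≤ c) (hcd1 : c + 1 ≤ d - 1) (hd : 2 ≤ d)
    (a : MidIdx n d (c-1) c) (y : SufIdx n d c) :
    Nmat p c a y * winMarg p c (c+1) (ycut c y) =
      winMatrix p (c-1) c (c+1) a (ycut c y) * winMarg p c d (ysuf c y) := by
  have hcd : c + 1 ≤ d := by omega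
  have l1 : Nmat p c a y = ∑ z : ∀ i : {i : Fin d // (i : ℕ) < c - 1 ∨ d ≤ (i : ℕ)}, Fin (n i.1), p (fun i : Fin d => (if h : c - 1 ≤ ((i : Fin d) : ℕ) ∧ ((i : Fin d) : ℕ) < d then mcat c a y ⟨i, h⟩ else z ⟨i, by omega⟩)) := rfl
  have l2a : winMatrix p (c-1) c (c+1) a (ycut c y) =
      ∑ z : ∀ i : {i : Fin d // (i : ℕ) < c - 1 ∨ d ≤ (i : ℕ)}, Fin (n i.1), winMarg p 0 (c+1) (fun i => (if h : c - 1 ≤ ((i.1 : Fin d) : ℕ) ∧ ((i.1 : Fin d) : ℕ) < d then mcat c a y ⟨i.1, h⟩ else z ⟨i.1, by omega⟩)) := by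
    rw [show winMatrix p (c-1) c (c+1) a (ycut c y) =
        ∑ v : ∀ i : {i : Fin d // (i : ℕ) < c - 1 ∨ c + 1 ≤ (i : ℕ)}, Fin (n i.1),
          p (fun j => if h1 : c - 1 ≤ (j : ℕ) ∧ (j : ℕ) < c then a ⟨j, h1⟩
              else if h2 : c ≤ (j : ℕ) ∧ (j : ℕ) < c + 1 then ycut c y ⟨j, h2⟩
              else v ⟨j, by omega⟩) from rfl]
    rw [sum_pi_split (fun i : Fin d => n i)
      (fun i => (i : ℕ) < c - 1 ∨ d ≤ (i : ℕ)) (fun i => (i : ℕ) < 0 ∨ c + 1 ≤ (i : ℕ))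
      (fun i => (i : ℕ) < c - 1 ∨ c + 1 ≤ (i : ℕ))
      (fun i => by have := i.isLt; omega) (fun i h1 h2 => by have := i.isLt; omega)]
    refine Finset.sum_congr rfl fun z _ => ?_
    rw [winMarg]
    refine Finset.sum_congr rfl fun w _ => ?_
    congr 1
    funext i
    have hid := i.isLt
    simp only [mcat, ycut]
    split_ifs <;> first | rfl | omega
  calc Nmat p c a y * winMarg p c (c+1) (ycut c y)
      = ∑ z : ∀ i : {i : Fin d // (i : ℕ) < c - 1 ∨ d ≤ (i : ℕ)}, Fin (n i.1), p (fun i : Fin d => (if h : c - 1 ≤ ((i : Fin d) : ℕ) ∧ ((i : Fin d) : ℕ) < d then mcat c a y ⟨i, h⟩ else z ⟨i, by omega⟩)) * winMarg p c (c+1) (ycut c y) := by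
        rw [l1, Finset.sum_mul]
    _ = ∑ z : ∀ i : {i : Fin d // (i : ℕ) < c - 1 ∨ d ≤ (i : ℕ)}, Fin (n i.1), winMarg p 0 (c+1) (fun i => (if h : c - 1 ≤ ((i.1 : Fin d) : ℕ) ∧ ((i.1 : Fin d) : ℕ) < d then mcat c a y ⟨i.1, h⟩ else z ⟨i.1, by omega⟩)) * winMarg p c d (ysuf c y) := by
        refine Finset.sum_congr rfl fun z _ => ?_
        have hz := hM (c+1) (by omega) (by omega) (fun i : Fin d => (if h : c - 1 ≤ ((i : Fin d) : ℕ) ∧ ((i : Fin d) : ℕ) < d then mcat c a y ⟨i, h⟩ else z ⟨i, by omega⟩))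
        have e1 : winMarg p c (c+1) (fun i : {i : Fin d // c ≤ (i : ℕ) ∧ (i : ℕ) < c + 1} => (if h : c - 1 ≤ ((i.1 : Fin d) : ℕ) ∧ ((i.1 : Fin d) : ℕ) < d then mcat c a y ⟨i.1, h⟩ else z ⟨i.1, by omega⟩)) = winMarg p c (c+1) (ycut c y) := by
          congr 1
          funext i
          have hid := i.1.isLt
          simp only [mcat, ycut]
          split_ifs <;> first | rfl | omega
        have e2 : winMarg p c d (fun i : {i : Fin d // c ≤ (i : ℕ) ∧ (i : ℕ) < d} => (if h : c - 1 ≤ ((i.1 : Fin d) : ℕ) ∧ ((i.1 : Fin d) : ℕ) < d then mcat c a y ⟨i.1, h⟩ else z ⟨i.1, by omega⟩)) = winMarg p c d (ysuf c y) := by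
          congr 1
          funext i
          have hid := i.1.isLt
          simp only [mcat, ysuf]
          split_ifs <;> first | rfl | omega
        rw [← e1, ← e2]
        exact hz
    _ = winMatrix p (c-1) c (c+1) a (ycut c y) * winMarg p c d (ysuf c y) := by
        rw [l2a, Finset.sum_mul]

lemma stepB (p : PreIdx n d → ℝ) (hpos : ∀ x, 0 ≤ p x)
    (hM : ∀ k : ℕ, 2 ≤ k → k ≤ d - 1 → ∀ x : PreIdx n d,
      p x * winMarg p (k - 1) k (fun i => x i.1) =
        winMarg p 0 k (fun i => x i.1) * winMarg p (k - 1) d (fun i => x i.1))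
    (c : ℕ) (hc1 : 1 ≤ c) (hc2 : c ≤ d - 1) (hd : 2 ≤ d) :
    mrank (Nmat p c) = mrank (winMatrix p (c-1) c (c+1)) := by
  by_cases hcase : c + 1 ≤ d - 1
  · apply mrank_eq_of_cols
    · intro y
      by_cases hmc : winMarg p c (c+1) (ycut c y) = 0
      · have hz : (fun a => Nmat p c a y) = 0 := by
          funext a
          show Nmat p c a y = (0 : ℝ)
          rw [show Nmat p c a y = ∑ z : ∀ i : {i : Fin d // (i : ℕ) < c - 1 ∨ d ≤ (i : ℕ)}, Fin (n i.1), p (fun i : Fin d => (if h : c - 1 ≤ ((i : Fin d) : ℕ) ∧ ((i : Fin d) : ℕ) < d then mcat c a y ⟨i, h⟩ else z ⟨i, by omega⟩)) from rfl]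
          refine Finset.sum_eq_zero fun z _ => ?_
          refine winMarg_eq_zero p hpos (a := c) (b := c+1) ?_
          have e1 : winMarg p c (c+1) (fun i : {i : Fin d // c ≤ (i : ℕ) ∧ (i : ℕ) < c + 1} => (if h : c - 1 ≤ ((i.1 : Fin d) : ℕ) ∧ ((i.1 : Fin d) : ℕ) < d then mcat c a y ⟨i.1, h⟩ else z ⟨i.1, by omega⟩)) = winMarg p c (c+1) (ycut c y) := by
            congr 1
            funext i
            have hid := i.1.isLt
            simp only [mcat, ycut]
            split_ifs <;> first | rfl | omega
          rw [e1]
          exact hmc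
        rw [hz]; exact Submodule.zero_mem _
      · have key : (fun a => Nmat p c a y) =
            (winMarg p c d (ysuf c y) / winMarg p c (c+1) (ycut c y)) •
              (fun a => winMatrix p (c-1) c (c+1) a (ycut c y)) := by
          funext a
          have hk := stepB_key p hM c hc1 hcase hd a y
          show Nmat p c a y = _ * winMatrix p (c-1) c (c+1) a (ycut c y)
          rw [div_mul_eq_mul_div, eq_div_iff hmc]
          linarith [hk]
        rw [key]
        exact Submodule.smul_mem _ _ (Submodule.subset_span ⟨ycut c y, rfl⟩)
    · intro b
      have key : (fun a => winMatrix p (c-1) c (c+1) a b) =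
          ∑ u : ∀ i : {i : Fin d // c + 1 ≤ (i : ℕ)}, Fin (n i.1),
            (fun a => Nmat p c a (Yext c b u)) := by
        funext a
        rw [Finset.sum_apply]
        rw [show winMatrix p (c-1) c (c+1) a b =
            ∑ v : ∀ i : {i : Fin d // (i : ℕ) < c - 1 ∨ c + 1 ≤ (i : ℕ)}, Fin (n i.1),
              p (fun j => if h1 : c - 1 ≤ (j : ℕ) ∧ (j : ℕ) < c then a ⟨j, h1⟩
                  else if h2 : c ≤ (j : ℕ) ∧ (j : ℕ) < c + 1 then b ⟨j, h2⟩
                  else v ⟨j, by omega⟩) from rfl]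
        rw [sum_pi_split (fun i : Fin d => n i)
          (fun i => c + 1 ≤ (i : ℕ)) (fun i => (i : ℕ) < c - 1 ∨ d ≤ (i : ℕ))
          (fun i => (i : ℕ) < c - 1 ∨ c + 1 ≤ (i : ℕ))
          (fun i => by have := i.isLt; omega) (fun i h1 h2 => by have := i.isLt; omega)]
        refine Finset.sum_congr rfl fun u _ => ?_
        show _ = winMarg p (c-1) d (mcat c a (Yext c b u))
        rw [winMarg]
        refine Finset.sum_congr rfl fun w _ => ?_
        congr 1
        funext i
        have hid := i.isLt
        simp only [mcat, Yext]
        split_ifs <;> first | rfl | omega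
      rw [key]
      exact Submodule.sum_mem _ fun u _ => Submodule.subset_span ⟨Yext c b u, rfl⟩
  · -- c = d - 1
    have hd1 : d = c + 1 := by omega
    subst hd1
    apply mrank_eq_of_cols
    · intro y
      refine Submodule.subset_span ⟨ycut c y, ?_⟩
      funext a
      show winMatrix p (c-1) c (c+1) a (ycut c y) = Nmat p c a y
      show _ = winMarg p (c-1) (c+1) (mcat c a y)
      rw [winMatrix, winMarg]
      show Finset.sum _ _ = Finset.sum _ _
      refine Finset.sum_congr rfl fun z _ => ?_
      congr 1
      funext i
      have hid := i.isLt
      simp only [mcat, ycut]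
      split_ifs <;> first | rfl | omega
    · intro b
      refine Submodule.subset_span ⟨(fun i => b ⟨i.1, ⟨i.2, i.1.isLt⟩⟩ : SufIdx n (c+1) c), ?_⟩
      funext a
      show Nmat p c a _ = winMatrix p (c-1) c (c+1) a b
      show winMarg p (c-1) (c+1) (mcat c a _) = _
      rw [winMatrix, winMarg]
      show Finset.sum _ _ = Finset.sum _ _
      refine Finset.sum_congr rfl fun z _ => ?_
      congr 1
      funext i
      have hid := i.isLt
      simp only [mcat]
      split_ifs <;> first | rfl | omega

def bmid (c : ℕ) (ab : MidIdx n d (c-2) c) : MidIdx n d (c-1) c :=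
  fun i => ab ⟨i.1, ⟨le_trans (Nat.sub_le_sub_left (by omega) c) i.2.1, i.2.2⟩⟩

lemma stepC_key (p : PreIdx n d → ℝ)
    (hM : ∀ k : ℕ, 2 ≤ k → k ≤ d - 1 → ∀ x : PreIdx n d,
      p x * winMarg p (k - 1) k (fun i => x i.1) =
        winMarg p 0 k (fun i => x i.1) * winMarg p (k - 1) d (fun i => x i.1))
    (c : ℕ) (hc : 2 ≤ c) (hc2 : c ≤ d - 1) (hd : 2 ≤ d)
    (ab : MidIdx n d (c-2) c) (β : MidIdx n d c (c+1)) :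
    winMatrix p (c-2) c (c+1) ab β * winMarg p (c-1) c (bmid c ab) =
      winMarg p (c-2) c ab * winMatrix p (c-1) c (c+1) (bmid c ab) β := by
  have hcd : c + 1 ≤ d := by omega
  have haveA : winMarg p (c-2) c ab = ∑ z : ∀ i : {i : Fin d // (i : ℕ) < c - 2}, Fin (n i.1), winMarg p 0 c (fun i : {i : Fin d // 0 ≤ (i : ℕ) ∧ (i : ℕ) < c} => if h : ((i.1 : Fin d) : ℕ) < c - 2 then z ⟨i.1, h⟩ else ab ⟨i.1, ⟨Nat.le_of_not_lt h, i.2.2⟩⟩) := by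
    rw [show winMarg p (c-2) c ab = ∑ u : ∀ i : {i : Fin d // (i : ℕ) < c - 2 ∨ c ≤ (i : ℕ)}, Fin (n i.1),
        p (fun j => if h : c - 2 ≤ (j : ℕ) ∧ (j : ℕ) < c then ab ⟨j, h⟩ else u ⟨j, by omega⟩) from rfl]
    rw [sum_pi_split (fun i : Fin d => n i)
      (fun i => (i : ℕ) < c - 2) (fun i => (i : ℕ) < 0 ∨ c ≤ (i : ℕ))
      (fun i => (i : ℕ) < c - 2 ∨ c ≤ (i : ℕ))
      (fun i => by omega) (fun i h1 h2 => by omega)]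
    refine Finset.sum_congr rfl fun z _ => ?_
    rw [winMarg]
    refine Finset.sum_congr rfl fun w _ => ?_
    congr 1
    funext i
    have hid := i.isLt
    first
            | (dsimp only; split_ifs <;> first | rfl | omega)
            | (split_ifs <;> first | rfl | omega)
  have haveB : winMatrix p (c-1) c (c+1) (bmid c ab) β = ∑ w : ∀ i : {i : Fin d // c + 1 ≤ (i : ℕ)}, Fin (n i.1), winMarg p (c-1) d (fun i : {i : Fin d // c - 1 ≤ (i : ℕ) ∧ (i : ℕ) < d} => if h1 : ((i.1 : Fin d) : ℕ) < c then ab ⟨i.1, ⟨le_trans (Nat.sub_le_sub_left (by omega) c) i.2.1, h1⟩⟩ else if h2 : ((i.1 : Fin d) : ℕ) < c + 1 then β ⟨i.1, ⟨Nat.le_of_not_lt h1, h2⟩⟩ else w ⟨i.1, Nat.le_of_not_lt h2⟩) := by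
    rw [show winMatrix p (c-1) c (c+1) (bmid c ab) β =
        ∑ u : ∀ i : {i : Fin d // (i : ℕ) < c - 1 ∨ c + 1 ≤ (i : ℕ)}, Fin (n i.1),
          p (fun j => if h1 : c - 1 ≤ (j : ℕ) ∧ (j : ℕ) < c then bmid c ab ⟨j, h1⟩
              else if h2 : c ≤ (j : ℕ) ∧ (j : ℕ) < c + 1 then β ⟨j, h2⟩
              else u ⟨j, by omega⟩) from rfl]
    rw [sum_pi_split (fun i : Fin d => n i)
      (fun i => c + 1 ≤ (i : ℕ)) (fun i => (i : ℕ) < c - 1 ∨ d ≤ (i : ℕ))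
      (fun i => (i : ℕ) < c - 1 ∨ c + 1 ≤ (i : ℕ))
      (fun i => by have := i.isLt; omega) (fun i h1 h2 => by have := i.isLt; omega)]
    refine Finset.sum_congr rfl fun w _ => ?_
    rw [winMarg]
    refine Finset.sum_congr rfl fun u _ => ?_
    congr 1
    funext i
    have hid := i.isLt
    simp only [bmid]
    first
            | (dsimp only; split_ifs <;> first | rfl | omega)
            | (split_ifs <;> first | rfl | omega)
  calc winMatrix p (c-2) c (c+1) ab β * winMarg p (c-1) c (bmid c ab)
      = ∑ v : ∀ i : {i : Fin d // (i : ℕ) < c - 2 ∨ c + 1 ≤ (i : ℕ)}, Fin (n i.1), p (fun j : Fin d => if h1 : c - 2 ≤ (j : ℕ) ∧ (j : ℕ) < c then ab ⟨j, h1⟩ else if h2 : c ≤ (j : ℕ) ∧ (j : ℕ) < c + 1 then β ⟨j, h2⟩ else v ⟨j, by omega⟩) * winMarg p (c-1) c (bmid c ab) := by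
        rw [show winMatrix p (c-2) c (c+1) ab β = ∑ v : ∀ i : {i : Fin d // (i : ℕ) < c - 2 ∨ c + 1 ≤ (i : ℕ)}, Fin (n i.1), p (fun j : Fin d => if h1 : c - 2 ≤ (j : ℕ) ∧ (j : ℕ) < c then ab ⟨j, h1⟩ else if h2 : c ≤ (j : ℕ) ∧ (j : ℕ) < c + 1 then β ⟨j, h2⟩ else v ⟨j, by omega⟩) from rfl,
          Finset.sum_mul]
    _ = ∑ v : ∀ i : {i : Fin d // (i : ℕ) < c - 2 ∨ c + 1 ≤ (i : ℕ)}, Fin (n i.1), winMarg p 0 c (fun i : {i : Fin d // 0 ≤ (i : ℕ) ∧ (i : ℕ) < c} => if h1 : c - 2 ≤ ((i.1 : Fin d) : ℕ) ∧ ((i.1 : Fin d) : ℕ) < c then ab ⟨i.1, h1⟩ else if h2 : c ≤ ((i.1 : Fin d) : ℕ) ∧ ((i.1 : Fin d) : ℕ) < c + 1 then β ⟨i.1, h2⟩ else v ⟨i.1, by omega⟩) *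
          winMarg p (c-1) d (fun i : {i : Fin d // c - 1 ≤ (i : ℕ) ∧ (i : ℕ) < d} => if h1 : c - 2 ≤ ((i.1 : Fin d) : ℕ) ∧ ((i.1 : Fin d) : ℕ) < c then ab ⟨i.1, h1⟩ else if h2 : c ≤ ((i.1 : Fin d) : ℕ) ∧ ((i.1 : Fin d) : ℕ) < c + 1 then β ⟨i.1, h2⟩ else v ⟨i.1, by omega⟩) := by
        refine Finset.sum_congr rfl fun v _ => ?_
        have hz := hM c hc hc2 (fun j : Fin d => if h1 : c - 2 ≤ (j : ℕ) ∧ (j : ℕ) < c then ab ⟨j, h1⟩ else if h2 : c ≤ (j : ℕ) ∧ (j : ℕ) < c + 1 then β ⟨j, h2⟩ else v ⟨j, by omega⟩)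
        have e1 : winMarg p (c-1) c (fun i : {i : Fin d // c - 1 ≤ (i : ℕ) ∧ (i : ℕ) < c} => if h1 : c - 2 ≤ ((i.1 : Fin d) : ℕ) ∧ ((i.1 : Fin d) : ℕ) < c then ab ⟨i.1, h1⟩ else if h2 : c ≤ ((i.1 : Fin d) : ℕ) ∧ ((i.1 : Fin d) : ℕ) < c + 1 then β ⟨i.1, h2⟩ else v ⟨i.1, by omega⟩)
            = winMarg p (c-1) c (bmid c ab) := by
          congr 1
          funext i
          have hid := i.1.isLt
          simp only [bmid]
          first
            | (dsimp only; split_ifs <;> first | rfl | omega)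
            | (split_ifs <;> first | rfl | omega)
        rw [← e1]
        exact hz
    _ = ∑ z : ∀ i : {i : Fin d // (i : ℕ) < c - 2}, Fin (n i.1), ∑ w : ∀ i : {i : Fin d // c + 1 ≤ (i : ℕ)}, Fin (n i.1), winMarg p 0 c (fun i : {i : Fin d // 0 ≤ (i : ℕ) ∧ (i : ℕ) < c} => if h : ((i.1 : Fin d) : ℕ) < c - 2 then z ⟨i.1, h⟩ else ab ⟨i.1, ⟨Nat.le_of_not_lt h, i.2.2⟩⟩) * winMarg p (c-1) d (fun i : {i : Fin d // c - 1 ≤ (i : ℕ) ∧ (i : ℕ) < d} => if h1 : ((i.1 : Fin d) : ℕ) < c then ab ⟨i.1, ⟨le_trans (Nat.sub_le_sub_left (by omega) c) i.2.1, h1⟩⟩ else if h2 : ((i.1 : Fin d) : ℕ) < c + 1 then β ⟨i.1, ⟨Nat.le_of_not_lt h1, h2⟩⟩ else w ⟨i.1, Nat.le_of_not_lt h2⟩) := by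
        rw [sum_pi_split (fun i : Fin d => n i)
          (fun i => (i : ℕ) < c - 2) (fun i => c + 1 ≤ (i : ℕ))
          (fun i => (i : ℕ) < c - 2 ∨ c + 1 ≤ (i : ℕ))
          (fun i => Iff.rfl) (fun i h1 h2 => by omega)]
        refine Finset.sum_congr rfl fun z _ => ?_
        refine Finset.sum_congr rfl fun w _ => ?_
        refine congrArg₂ (· * ·) ?_ ?_ <;>
          · congr 1
            funext i
            have hid := i.1.isLt
            first
            | (dsimp only; split_ifs <;> first | rfl | omega)
            | (split_ifs <;> first | rfl | omega)
    _ = (∑ z : ∀ i : {i : Fin d // (i : ℕ) < c - 2}, Fin (n i.1), winMarg p 0 c (fun i : {i : Fin d // 0 ≤ (i : ℕ) ∧ (i : ℕ) < c} => if h : ((i.1 : Fin d) : ℕ) < c - 2 then z ⟨i.1, h⟩ else ab ⟨i.1, ⟨Nat.le_of_not_lt h, i.2.2⟩⟩)) * (∑ w : ∀ i : {i : Fin d // c + 1 ≤ (i : ℕ)}, Fin (n i.1), winMarg p (c-1) d (fun i : {i : Fin d // c - 1 ≤ (i : ℕ) ∧ (i : ℕ) < d} => if h1 : ((i.1 : Fin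 d) : ℕ) < c then ab ⟨i.1, ⟨le_trans (Nat.sub_le_sub_left (by omega) c) i.2.1, h1⟩⟩ else if h2 : ((i.1 : Fin d) : ℕ) < c + 1 then β ⟨i.1, ⟨Nat.le_of_not_lt h1, h2⟩⟩ else w ⟨i.1, Nat.le_of_not_lt h2⟩)) := by
        rw [Finset.sum_mul_sum]
    _ = winMarg p (c-2) c ab * winMatrix p (c-1) c (c+1) (bmid c ab) β := by
        rw [haveA, haveB]

lemma stepC (p : PreIdx n d → ℝ) (hpos : ∀ x, 0 ≤ p x)
    (hM : ∀ k : ℕ, 2 ≤ k → k ≤ d - 1 → ∀ x : PreIdx n d,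
      p x * winMarg p (k - 1) k (fun i => x i.1) =
        winMarg p 0 k (fun i => x i.1) * winMarg p (k - 1) d (fun i => x i.1))
    (c : ℕ) (hc : 2 ≤ c) (hc2 : c ≤ d - 1) (hd : 2 ≤ d) :
    mrank (winMatrix p (c-2) c (c+1)) = mrank (winMatrix p (c-1) c (c+1)) := by
  have hcd : c + 1 ≤ d := by omega
  apply mrank_eq_of_rows
  · intro ab
    by_cases hq : winMarg p (c-1) c (bmid c ab) = 0
    · have hz : (fun β => winMatrix p (c-2) c (c+1) ab β) = 0 := by
        funext β
        show winMatrix p (c-2) c (c+1) ab β = (0 : ℝ)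
        rw [show winMatrix p (c-2) c (c+1) ab β = ∑ v : ∀ i : {i : Fin d // (i : ℕ) < c - 2 ∨ c + 1 ≤ (i : ℕ)}, Fin (n i.1), p (fun j : Fin d => if h1 : c - 2 ≤ (j : ℕ) ∧ (j : ℕ) < c then ab ⟨j, h1⟩ else if h2 : c ≤ (j : ℕ) ∧ (j : ℕ) < c + 1 then β ⟨j, h2⟩ else v ⟨j, by omega⟩) from rfl]
        refine Finset.sum_eq_zero fun v _ => ?_
        refine winMarg_eq_zero p hpos (a := c - 1) (b := c) ?_
        have e1 : winMarg p (c-1) c (fun i : {i : Fin d // c - 1 ≤ (i : ℕ) ∧ (i : ℕ) < c} => if h1 : c - 2 ≤ ((i.1 : Fin d) : ℕ) ∧ ((i.1 : Fin d) : ℕ) < c then ab ⟨i.1, h1⟩ else if h2 : c ≤ ((i.1 : Fin d) : ℕ) ∧ ((i.1 : Fin d) : ℕ) < c + 1 then β ⟨i.1, h2⟩ else v ⟨i.1, by omega⟩)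
            = winMarg p (c-1) c (bmid c ab) := by
          congr 1
          funext i
          have hid := i.1.isLt
          simp only [bmid]
          first
            | (dsimp only; split_ifs <;> first | rfl | omega)
            | (split_ifs <;> first | rfl | omega)
        rw [e1]
        exact hq
      rw [hz]; exact Submodule.zero_mem _
    · have key : (fun β => winMatrix p (c-2) c (c+1) ab β) =
          (winMarg p (c-2) c ab / winMarg p (c-1) c (bmid c ab)) •
            (fun β => winMatrix p (c-1) c (c+1) (bmid c ab) β) := by
        funext β
        have hk := stepC_key p hM c hc hc2 hd ab β
        show winMatrix p (c-2) c (c+1) ab β = _ * winMatrix p (c-1) c (c+1) (bmid c ab) β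
        rw [div_mul_eq_mul_div, eq_div_iff hq]
        linarith [hk]
      rw [key]
      exact Submodule.smul_mem _ _ (Submodule.subset_span ⟨bmid c ab, rfl⟩)
  · intro b'
    have key : (fun β => winMatrix p (c-1) c (c+1) b' β) =
        ∑ w : ∀ i : {i : Fin d // c - 2 ≤ (i : ℕ) ∧ (i : ℕ) < c - 1}, Fin (n i.1), (fun β => winMatrix p (c-2) c (c+1) (fun i => if h : ((i.1 : Fin d) : ℕ) < c - 1 then w ⟨i.1, ⟨i.2.1, h⟩⟩ else b' ⟨i.1, ⟨Nat.le_of_not_lt h, i.2.2⟩⟩ : MidIdx n d (c-2) c) β) := by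
      funext β
      rw [Finset.sum_apply]
      rw [show winMatrix p (c-1) c (c+1) b' β =
          ∑ u : ∀ i : {i : Fin d // (i : ℕ) < c - 1 ∨ c + 1 ≤ (i : ℕ)}, Fin (n i.1),
            p (fun j => if h1 : c - 1 ≤ (j : ℕ) ∧ (j : ℕ) < c then b' ⟨j, h1⟩
                else if h2 : c ≤ (j : ℕ) ∧ (j : ℕ) < c + 1 then β ⟨j, h2⟩
                else u ⟨j, by omega⟩) from rfl]
      rw [sum_pi_split (fun i : Fin d => n i)
        (fun i => c - 2 ≤ (i : ℕ) ∧ (i : ℕ) < c - 1) (fun i => (i : ℕ) < c - 2 ∨ c + 1 ≤ (i : ℕ))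
        (fun i => (i : ℕ) < c - 1 ∨ c + 1 ≤ (i : ℕ))
        (fun i => by omega) (fun i h1 h2 => by omega)]
      refine Finset.sum_congr rfl fun w _ => ?_
      rw [show winMatrix p (c-2) c (c+1) (fun i => if h : ((i.1 : Fin d) : ℕ) < c - 1 then w ⟨i.1, ⟨i.2.1, h⟩⟩ else b' ⟨i.1, ⟨Nat.le_of_not_lt h, i.2.2⟩⟩ : MidIdx n d (c-2) c) β =
          ∑ v : ∀ i : {i : Fin d // (i : ℕ) < c - 2 ∨ c + 1 ≤ (i : ℕ)}, Fin (n i.1), p (fun j : Fin d => if h1 : c - 2 ≤ (j : ℕ) ∧ (j : ℕ) < c then (fun i => if h : ((i.1 : Fin d) : ℕ) < c - 1 then w ⟨i.1, ⟨i.2.1, h⟩⟩ else b' ⟨i.1, ⟨Nat.le_of_not_lt h, i.2.2⟩⟩ : MidIdx n d (c-2) c) ⟨j, h1⟩ else if h2 : c ≤ (j : ℕ) ∧ (j : ℕ) < c + 1 then β ⟨j, h2⟩ else v ⟨j, by omega⟩) from rfl]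
      refine Finset.sum_congr rfl fun v _ => ?_
      congr 1
      funext i
      have hid := i.isLt
      first
        | (dsimp only; split_ifs <;> first | rfl | omega)
        | (split_ifs <;> first | rfl | omega)
    rw [key]
    exact Submodule.sum_mem _ fun w _ => Submodule.subset_span ⟨(fun i => if h : ((i.1 : Fin d) : ℕ) < c - 1 then w ⟨i.1, ⟨i.2.1, h⟩⟩ else b' ⟨i.1, ⟨Nat.le_of_not_lt h, i.2.2⟩⟩ : MidIdx n d (c-2) c), rfl⟩

end mainlemmas


/-- ranks of unfolding matrices of a Markov model.
For a discrete Markov model `p` and `1 ≤ k ≤ d - 1` (1-based), the rank of the `k`-th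
unfolding matrix equals the rank of the pair-marginal matrix `p(x_k; x_{k+1})`, and,
when `2 ≤ k`, it also equals the rank of the triple-marginal matrix
`p((x_{k-1}, x_k); x_{k+1})`.
(0-based encoding: the split position is `c = k`; the pair marginal is the window
`[c-1, c+1)` split at `c`, the triple marginal is the window `[c-2, c+1)` split at `c`.) -/
theorem markov_unfolding_rank
    (d : ℕ) (n : ℕ → ℕ) (p : PreIdx n d → ℝ) (hp : IsMarkov p)
    (c : ℕ) (hc1 : 1 ≤ c) (hc2 : c ≤ d - 1) :
    mrank (unfold p c) = mrank (winMatrix p (c - 1) c (c + 1)) ∧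
      (2 ≤ c → mrank (unfold p c) = mrank (winMatrix p (c - 2) c (c + 1))) := by
  obtain ⟨hpos, hsum, hM⟩ := hp
  have hd : 2 ≤ d := by omega
  have h1 : mrank (unfold p c) = mrank (winMatrix p (c - 1) c (c + 1)) :=
    (stepA p hpos hM c hc1 hc2 hd).trans (stepB p hpos hM c hc1 hc2 hd)
  exact ⟨h1, fun h2c => h1.trans (stepC p hpos hM c h2c hc2 hd).symm⟩
end
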